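/- arXiv:1509.08051 — 5 statements merged into one kernel-verified Lean document; each statement's English description precedes it below -/
import Mathlib

section
/- If $K$ is an algebraically closed field and $R_1$, $R_2$ are commutative $K$-algebras that are integral domains, then $R_1 \otimes_K R_2$ is an integral domain. -/
open scoped TensorProduct

/-- Nullstellensatz-style lemma: for a finitely generated domain over an algebraically
closed field and a maximal ideal `m`, there is a `K`-algebra map to `K` whose kernel is `m`. -/
lemma exists_algHom_of_isMaximal (K : Type*) [Field K] [IsAlgClosed K] (A : Type*)
    [CommRing A] [Algebra K A] [Algebra.FiniteType K A] (m : Ideal A) (hm : m.IsMaximal) :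
    ∃ φ : A →ₐ[K] K, ∀ a : A, φ a = 0 ↔ a ∈ m := by
  haveI := hm
  letI : Field (A ⧸ m) := Ideal.Quotient.field m
  haveI : Algebra.FiniteType K (A ⧸ m) :=
    Algebra.FiniteType.of_surjective (Ideal.Quotient.mkₐ K m)
      (Ideal.Quotient.mkₐ_surjective K m)
  haveI : IsJacobsonRing K := inferInstance
  haveI : Module.Finite K (A ⧸ m) := finite_of_finite_type_of_isJacobsonRing K (A ⧸ m)
  haveI : Algebra.IsIntegral K (A ⧸ m) := Algebra.IsIntegral.of_finite K (A ⧸ m)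
  have hsurj : Function.Surjective (algebraMap K (A ⧸ m)) :=
    IsAlgClosed.algebraMap_bijective_of_isIntegral.2
  have hinj : Function.Injective (algebraMap K (A ⧸ m)) := (algebraMap K (A ⧸ m)).injective
  let e : K ≃ₐ[K] (A ⧸ m) := AlgEquiv.ofBijective (Algebra.ofId K (A ⧸ m)) ⟨hinj, hsurj⟩
  refine ⟨(e.symm.toAlgHom).comp (Ideal.Quotient.mkₐ K m), fun a => ?_⟩
  constructor
  · intro h
    have : (Ideal.Quotient.mkₐ K m) a = 0 := by
      have := congrArg e h
      simpa using this
    exact (Ideal.Quotient.eq_zero_iff_mem).mp this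
  · intro h
    simp [Ideal.Quotient.eq_zero_iff_mem.mpr h]

set_option maxHeartbeats 1000000 in
set_option synthInstance.maxHeartbeats 400000 in
/-- If $K$ is an algebraically closed field and $R_1$, $R_2$ are commutative $K$-algebras
that are integral domains, then $R_1 \otimes_K R_2$ is an integral domain. -/
theorem stmt_0 (K R₁ R₂ : Type*) [Field K] [IsAlgClosed K]
    [CommRing R₁] [Algebra K R₁] [IsDomain R₁]
    [CommRing R₂] [Algebra K R₂] [IsDomain R₂] :
    IsDomain (R₁ ⊗[K] R₂) := by
  classical
  let b : Module.Basis (Module.Basis.ofVectorSpaceIndex K R₂) K R₂ := Module.Basis.ofVectorSpace K R₂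
  set ι := Module.Basis.ofVectorSpaceIndex K R₂
  let 𝔅 : Module.Basis ι R₁ (R₁ ⊗[K] R₂) := Algebra.TensorProduct.basis R₁ b
  haveI : Nonempty ι := b.index_nonempty
  haveI : Nontrivial (R₁ ⊗[K] R₂) := Equiv.nontrivial 𝔅.repr.toEquiv
  have key : ∀ x y : R₁ ⊗[K] R₂, x * y = 0 → x = 0 ∨ y = 0 := by
    intro x y hxy
    by_contra hcon
    push_neg at hcon
    obtain ⟨hx, hy⟩ := hcon
    set f : ι →₀ R₁ := 𝔅.repr x with hfdef
    set g : ι →₀ R₁ := 𝔅.repr y with hgdef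
    -- the finitely generated subalgebra containing all coefficients
    set s : Finset R₁ := f.support.image f ∪ g.support.image g with hs
    set A : Subalgebra K R₁ := Algebra.adjoin K (↑s : Set R₁) with hA
    haveI : Algebra.FiniteType K A := (Subalgebra.fg_iff_finiteType _).mp (Subalgebra.fg_adjoin_finset s)
    have hfA : ∀ i ∈ f.support, f i ∈ A :=
      fun i hi => Algebra.subset_adjoin
        (Finset.mem_coe.mpr (Finset.mem_union_left _ (Finset.mem_image_of_mem f hi)))
    have hgA : ∀ i ∈ g.support, g i ∈ A :=
      fun i hi => Algebra.subset_adjoin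
        (Finset.mem_coe.mpr (Finset.mem_union_right _ (Finset.mem_image_of_mem g hi)))
    let c : ι → A := fun i => if h : i ∈ f.support then ⟨f i, hfA i h⟩ else 0
    let d : ι → A := fun i => if h : i ∈ g.support then ⟨g i, hgA i h⟩ else 0
    have hc : ∀ i ∈ f.support, (c i : R₁) = f i := fun i hi => by simp only [c]; rw [dif_pos hi]
    have hd : ∀ i ∈ g.support, (d i : R₁) = g i := fun i hi => by simp only [d]; rw [dif_pos hi]
    let x' : A ⊗[K] R₂ := ∑ i ∈ f.support, c i ⊗ₜ[K] b i
    let y' : A ⊗[K] R₂ := ∑ i ∈ g.support, d i ⊗ₜ[K] b i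
    let Ψ : A ⊗[K] R₂ →ₐ[K] R₁ ⊗[K] R₂ :=
      Algebra.TensorProduct.map A.val (AlgHom.id K R₂)
    have hΨlin : ∀ z : A ⊗[K] R₂, Ψ z = LinearMap.rTensor R₂ A.val.toLinearMap z := by
      intro z
      induction z using TensorProduct.induction_on with
      | zero => rw [map_zero, map_zero]
      | tmul a r =>
        rw [Algebra.TensorProduct.map_tmul, LinearMap.rTensor_tmul]
        rfl
      | add u v hu hv => rw [map_add, map_add, hu, hv]
    have hΨinj : Function.Injective Ψ := by
      have h := Module.Flat.rTensor_preserves_injective_linearMap (M := R₂)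
        A.val.toLinearMap Subtype.val_injective
      intro u v huv
      apply h
      rw [← hΨlin, ← hΨlin, huv]
    have hΨx : Ψ x' = x := by
      have : Ψ x' = ∑ i ∈ f.support, (f i) ⊗ₜ[K] b i := by
        rw [map_sum]
        refine Finset.sum_congr rfl fun i hi => ?_
        rw [Algebra.TensorProduct.map_tmul]
        simp [hc i hi]
      rw [this]
      have hx2 : x = ∑ i ∈ f.support, f i • 𝔅 i := by
        conv_lhs => rw [← 𝔅.linearCombination_repr x]
        rw [Finsupp.linearCombination_apply, Finsupp.sum, ← hfdef]
      rw [hx2]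
      refine Finset.sum_congr rfl fun i hi => ?_
      exact (Algebra.TensorProduct.basis_repr_symm_apply' b (f i) i).symm
    have hΨy : Ψ y' = y := by
      have : Ψ y' = ∑ i ∈ g.support, (g i) ⊗ₜ[K] b i := by
        rw [map_sum]
        refine Finset.sum_congr rfl fun i hi => ?_
        rw [Algebra.TensorProduct.map_tmul]
        simp [hd i hi]
      rw [this]
      have hy2 : y = ∑ i ∈ g.support, g i • 𝔅 i := by
        conv_lhs => rw [← 𝔅.linearCombination_repr y]
        rw [Finsupp.linearCombination_apply, Finsupp.sum, ← hgdef]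
      rw [hy2]
      refine Finset.sum_congr rfl fun i hi => ?_
      exact (Algebra.TensorProduct.basis_repr_symm_apply' b (g i) i).symm
    have hxy' : x' * y' = 0 := by
      apply hΨinj
      rw [map_mul, hΨx, hΨy, hxy, map_zero]
    -- choose nonzero coefficients
    have hfne : f.support.Nonempty := by
      rw [Finsupp.support_nonempty_iff]
      intro h0
      exact hx (by simpa [hfdef] using congrArg 𝔅.repr.symm (h0 ▸ rfl : f = 0)) 
    have hgne : g.support.Nonempty := by
      rw [Finsupp.support_nonempty_iff]
      intro h0
      exact hy (by simpa [hgdef] using congrArg 𝔅.repr.symm (h0 ▸ rfl : g = 0))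
    obtain ⟨i₀, hi₀⟩ := hfne
    obtain ⟨j₀, hj₀⟩ := hgne
    -- every K-algebra map A → K kills c i₀ * d j₀
    have hkill : ∀ φ : A →ₐ[K] K, φ (c i₀ * d j₀) = 0 := by
      intro φ
      let ψ : A ⊗[K] R₂ →ₐ[K] R₂ :=
        (Algebra.TensorProduct.lid K R₂).toAlgHom.comp
          (Algebra.TensorProduct.map φ (AlgHom.id K R₂))
      have hψ : ∀ (a : A) (r : R₂), ψ (a ⊗ₜ[K] r) = φ a • r := by
        intro a r
        simp [ψ, Algebra.TensorProduct.map_tmul]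
      have hψx : ψ x' = ∑ i ∈ f.support, φ (c i) • b i := by
        rw [map_sum]; exact Finset.sum_congr rfl fun i hi => hψ _ _
      have hψy : ψ y' = ∑ i ∈ g.support, φ (d i) • b i := by
        rw [map_sum]; exact Finset.sum_congr rfl fun i hi => hψ _ _
      have h0 : ψ x' * ψ y' = 0 := by rw [← map_mul, hxy', map_zero]
      have hli := linearIndependent_iff'.mp b.linearIndependent
      rcases mul_eq_zero.mp h0 with h | h
      · have : φ (c i₀) = 0 := hli f.support (fun i => φ (c i)) (by rw [← hψx, h]) i₀ hi₀
        rw [map_mul, this, zero_mul]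
      · have : φ (d j₀) = 0 := hli g.support (fun i => φ (d i)) (by rw [← hψy, h]) j₀ hj₀
        rw [map_mul, this, mul_zero]
    -- hence c i₀ * d j₀ is in every maximal ideal, so it is 0
    haveI : IsJacobsonRing A := isJacobsonRing_of_finiteType (A := K)
    have hmem : c i₀ * d j₀ ∈ (⊥ : Ideal A).jacobson := by
      rw [Ideal.jacobson]
      rw [Ideal.mem_sInf]
      rintro J ⟨-, hJ⟩
      obtain ⟨φ, hφ⟩ := exists_algHom_of_isMaximal K A J hJ
      exact (hφ _).mp (hkill φ)
    rw [← Ideal.radical_eq_jacobson, Ideal.radical_bot_of_noZeroDivisors] at hmem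
    have : (c i₀ * d j₀ : A) = 0 := hmem
    have hne : (c i₀ * d j₀ : A) ≠ 0 := by
      intro h
      have : (c i₀ : R₁) * (d j₀ : R₁) = 0 := by
        have := congrArg (Subtype.val) h
        simpa using this
      rw [hc i₀ hi₀, hd j₀ hj₀] at this
      rcases mul_eq_zero.mp this with h' | h'
      · exact Finsupp.mem_support_iff.mp hi₀ h'
      · exact Finsupp.mem_support_iff.mp hj₀ h'
    exact hne this
  haveI : NoZeroDivisors (R₁ ⊗[K] R₂) :=
    ⟨fun {a b} h => key a b h⟩
  exact NoZeroDivisors.to_isDomain _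
end

section
/- Let $\Lambda = KQ/\langle\text{paths of length } L+1\rangle$ be a truncated path algebra and $P$ a finitely generated projective left $\Lambda$-module. Then for any $0 \le l \le L$, the module $J^l P$ is a projective module over the truncated path algebra $\Lambda/J^{L+1-l}$. -/
universe uV uE

/-- Paths of length at most `L` in a quiver, the canonical `K`-basis of the truncated
path algebra `KQ/⟨paths of length L+1⟩`. -/
abbrev PathLE (V : Type uV) [Quiver.{uE + 1} V] (L : ℕ) :=
  Σ a b : V, {p : Quiver.Path a b // p.length ≤ L}

/-- The Jacobson radical of a truncated path algebra: the ideal generated by (the classes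
of) all paths of positive length. -/
def radJ {V : Type uV} [Quiver.{uE + 1} V] {L : ℕ} {K Λ : Type*} [Field K] [Ring Λ] [Algebra K Λ]
    (bas : Module.Basis (PathLE V L) K Λ) : Ideal Λ :=
  Ideal.span {x | ∃ (a b : V) (p : Quiver.Path a b) (hp : p.length ≤ L),
    0 < p.length ∧ x = bas ⟨a, b, p, hp⟩}

set_option maxHeartbeats 1000000

section Paths

variable {V : Type uV} [Quiver.{uE + 1} V]

/-- Split a path into its first `l` arrows and the rest. -/
def splitAt (l : ℕ) : {a b : V} → (r : Quiver.Path a b) →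
    Σ m : V, Quiver.Path a m × Quiver.Path m b
  | _, _, Quiver.Path.nil => ⟨_, Quiver.Path.nil, Quiver.Path.nil⟩
  | _, _, Quiver.Path.cons p e =>
    if p.length + 1 ≤ l then ⟨_, p.cons e, Quiver.Path.nil⟩
    else ⟨(splitAt l p).1, (splitAt l p).2.1, (splitAt l p).2.2.cons e⟩

theorem splitAt_spec (l : ℕ) : ∀ {a b : V} (r : Quiver.Path a b),
    (splitAt l r).2.1.comp (splitAt l r).2.2 = r
  | _, _, Quiver.Path.nil => by rw [splitAt]; rfl
  | _, _, Quiver.Path.cons p e => by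
    rw [splitAt]
    by_cases hc : p.length + 1 ≤ l
    · rw [if_pos hc]; rfl
    · rw [if_neg hc]
      show ((splitAt l p).2.1.comp (splitAt l p).2.2).cons e = _
      rw [splitAt_spec l p]

theorem splitAt_fst_length (l : ℕ) : ∀ {a b : V} (r : Quiver.Path a b),
    l ≤ r.length → (splitAt l r).2.1.length = l
  | _, _, Quiver.Path.nil, h => by
    rw [splitAt]; simpa using (Nat.le_zero.mp h).symm
  | _, _, Quiver.Path.cons p e, h => by
    rw [splitAt]
    by_cases hc : p.length + 1 ≤ l
    · rw [if_pos hc]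
      have : p.length + 1 = l := le_antisymm hc (by simpa using h)
      simpa [Quiver.Path.length]
    · rw [if_neg hc]
      exact splitAt_fst_length l p (by omega)

theorem splitAt_snd_length (l : ℕ) : ∀ {a b : V} (r : Quiver.Path a b),
    (splitAt l r).2.2.length = r.length - l
  | _, _, Quiver.Path.nil => by rw [splitAt]; simp
  | _, _, Quiver.Path.cons p e => by
    rw [splitAt]
    by_cases hc : p.length + 1 ≤ l
    · rw [if_pos hc]
      simp [Quiver.Path.length]
      omega
    · rw [if_neg hc]
      show ((splitAt l p).2.2.cons e).length = _
      have := splitAt_snd_length l p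
      simp only [Quiver.Path.length_cons, this]
      omega

theorem splitAt_comp (l : ℕ) {a b : V} (r : Quiver.Path a b) {cc : V} (s : Quiver.Path b cc)
    (h : l ≤ r.length) :
    splitAt l (r.comp s) = ⟨(splitAt l r).1, ((splitAt l r).2.1, (splitAt l r).2.2.comp s)⟩ := by
  induction s with
  | nil => rfl
  | cons s e ih =>
    show splitAt l ((r.comp s).cons e) = _
    rw [splitAt]
    have hlen : ¬ ((r.comp s).length + 1 ≤ l) := by
      rw [Quiver.Path.length_comp]; omega
    rw [if_neg hlen, ih]; rfl

theorem splitAt_self (l : ℕ) {a m : V} (q1 : Quiver.Path a m) (h1 : q1.length = l) :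
    splitAt l q1 = ⟨m, (q1, Quiver.Path.nil)⟩ := by
  cases q1 with
  | nil =>
    rw [splitAt]
  | cons p e =>
    rw [splitAt, if_pos]
    rw [Quiver.Path.length_cons] at h1
    omega

theorem splitAt_comp_of_length (l : ℕ) {a m : V} (q1 : Quiver.Path a m) {b : V}
    (q2 : Quiver.Path m b) (h1 : q1.length = l) :
    splitAt l (q1.comp q2) = ⟨m, (q1, q2)⟩ := by
  induction q2 with
  | nil => exact splitAt_self l q1 h1
  | cons q2 e ih =>
    show splitAt l ((q1.comp q2).cons e) = _
    rw [splitAt, if_neg (by rw [Quiver.Path.length_comp]; omega), ih]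

theorem toPath_length {a b : V} (e : a ⟶ b) : (Quiver.Hom.toPath e).length = 1 := rfl

end Paths

section Alg

variable {V : Type uV} [Quiver.{uE + 1} V] {L : ℕ}
variable {K Λ : Type*} [Field K] [Ring Λ] [Algebra K Λ]
variable (bas : Module.Basis (PathLE V L) K Λ)

/-- The span of (classes of) paths of length at least `k`. -/
def Tspan (k : ℕ) : Submodule K Λ :=
  Submodule.span K {x | ∃ (a b : V) (p : Quiver.Path a b) (hp : p.length ≤ L),
    k ≤ p.length ∧ x = bas ⟨a, b, p, hp⟩}

theorem bas_congr (a b : V) (p p' : Quiver.Path a b) (hp : p.length ≤ L)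
    (hp' : p'.length ≤ L) (h : p = p') : bas ⟨a, b, ⟨p, hp⟩⟩ = bas ⟨a, b, ⟨p', hp'⟩⟩ := by
  subst h; rfl

theorem Tspan_zero : Tspan bas 0 = ⊤ := by
  rw [eq_top_iff, ← bas.span_eq]
  refine Submodule.span_mono ?_
  rintro _ ⟨⟨a, b, p, hp⟩, rfl⟩
  exact ⟨a, b, p, hp, Nat.zero_le _, rfl⟩

variable
    (hmul : ∀ (a b c : V) (p : Quiver.Path a b) (q : Quiver.Path b c)
        (hp : p.length ≤ L) (hq : q.length ≤ L),
      bas ⟨b, c, q, hq⟩ * bas ⟨a, b, p, hp⟩ =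
        if h : p.length + q.length ≤ L then
          bas ⟨a, c, p.comp q, by rwa [Quiver.Path.length_comp]⟩ else 0)
    (hmul0 : ∀ (a b b' c : V) (p : Quiver.Path a b) (q : Quiver.Path b' c)
        (hp : p.length ≤ L) (hq : q.length ≤ L), b ≠ b' →
      bas ⟨b', c, q, hq⟩ * bas ⟨a, b, p, hp⟩ = 0)

include hmul hmul0 in
theorem Tspan_mul {j k : ℕ} {x y : Λ} (hx : x ∈ Tspan bas j) (hy : y ∈ Tspan bas k) :
    x * y ∈ Tspan bas (j + k) := by
  induction hx using Submodule.span_induction with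
  | mem x hxm =>
    induction hy using Submodule.span_induction with
    | mem y hym =>
      obtain ⟨a1, b1, p1, hp1, hj, rfl⟩ := hxm
      obtain ⟨a2, b2, p2, hp2, hk, rfl⟩ := hym
      by_cases hb : b2 = a1
      · subst hb
        rw [hmul]
        split
        · refine Submodule.subset_span ⟨a2, b1, p2.comp p1, _, ?_, rfl⟩
          rw [Quiver.Path.length_comp]; omega
        · exact zero_mem _
      · rw [hmul0 a2 b2 a1 b1 p2 p1 hp2 hp1 hb]
        exact zero_mem _
    | zero => rw [mul_zero]; exact zero_mem _
    | add y1 y2 _ _ h1 h2 => rw [mul_add]; exact add_mem h1 h2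
    | smul c y _ h => rw [mul_smul_comm]; exact Submodule.smul_mem _ _ h
  | zero => rw [zero_mul]; exact zero_mem _
  | add x1 x2 _ _ h1 h2 => rw [add_mul]; exact add_mem h1 h2
  | smul c x _ h => rw [smul_mul_assoc]; exact Submodule.smul_mem _ _ h

include hmul hmul0 in
theorem radJ_le_Tspan {x : Λ} (hx : x ∈ radJ bas) : x ∈ Tspan bas 1 := by
  induction hx using Submodule.span_induction with
  | mem x hxm =>
    obtain ⟨a, b, p, hp, h1, rfl⟩ := hxm
    exact Submodule.subset_span ⟨a, b, p, hp, h1, rfl⟩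
  | zero => exact zero_mem _
  | add _ _ _ _ h1 h2 => exact add_mem h1 h2
  | smul a x _ h =>
    rw [smul_eq_mul]
    have ha : a ∈ Tspan bas 0 := by rw [Tspan_zero]; trivial
    have h2 := Tspan_mul bas hmul hmul0 ha h
    rw [zero_add] at h2
    exact h2

include hmul hmul0 in
theorem radJ_pow_le_Tspan (k : ℕ) {x : Λ} (hx : x ∈ radJ bas ^ k) : x ∈ Tspan bas k := by
  induction k generalizing x with
  | zero => rw [Tspan_zero]; trivial
  | succ k ih =>
    refine Submodule.mul_induction_on
      (show x ∈ radJ bas ^ k * radJ bas from hx) (fun y hy z hz => ?_)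
      (fun _ _ h1 h2 => add_mem h1 h2)
    exact Tspan_mul bas hmul hmul0 (ih hy) (radJ_le_Tspan bas hmul hmul0 hz)

include hmul in
theorem bas_mem_pow (k : ℕ) : ∀ {a b : V} (r : Quiver.Path a b) (hr : r.length ≤ L),
    k ≤ r.length → bas ⟨a, b, r, hr⟩ ∈ radJ bas ^ k := by
  induction k with
  | zero =>
    intro a b r hr _
    rw [Submodule.pow_zero, Ideal.one_eq_top]
    trivial
  | succ k ih =>
    intro a b r hr hk
    obtain ⟨n, hn⟩ : ∃ n, r.length = n + 1 := ⟨r.length - 1, by omega⟩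
    obtain ⟨m, f, q, hq, rfl⟩ := r.eq_toPath_comp_of_length_eq_succ hn
    have hlc : (f.toPath.comp q).length = 1 + q.length := by
      rw [Quiver.Path.length_comp, toPath_length]
    have h1 : (f.toPath).length ≤ L := by rw [toPath_length]; omega
    have hqL : q.length ≤ L := by omega
    have hm := hmul a m _ f.toPath q h1 hqL
    have hlen : (f.toPath).length + q.length ≤ L := by rw [toPath_length]; omega
    rw [dif_pos hlen] at hm
    rw [← hm, Submodule.pow_succ]
    refine Submodule.mul_mem_mul (ih q hqL (by omega)) ?_
    refine Ideal.subset_span ⟨a, m, f.toPath, h1, ?_, rfl⟩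
    rw [toPath_length]; omega

/-- Paths of length exactly `l`. -/
abbrev Dl (V : Type uV) [Quiver.{uE + 1} V] (L l : ℕ) : Type (max uV (uE + 1)) :=
  {z : PathLE V L // z.2.2.1.length = l}

variable (l : ℕ) (hl : l ≤ L)

def qOf {a b : V} (r : Quiver.Path a b) (hrl : l ≤ r.length) : Dl V L l :=
  ⟨⟨a, (splitAt l r).1, ⟨(splitAt l r).2.1, by rw [splitAt_fst_length l r hrl]; exact hl⟩⟩,
    splitAt_fst_length l r hrl⟩

def tOf {a b : V} (r : Quiver.Path a b) (hrL : r.length ≤ L) : PathLE V L :=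
  ⟨(splitAt l r).1, b, ⟨(splitAt l r).2.2,
    by rw [splitAt_snd_length]; exact le_trans (Nat.sub_le _ _) hrL⟩⟩

noncomputable def uMap : Λ →ₗ[K] (Dl V L l →₀ Λ) :=
  (Finsupp.lsum K fun z : PathLE V L =>
    if H : l ≤ z.2.2.1.length then
      (Finsupp.lsingle (qOf l hl z.2.2.1 H)).comp
        (LinearMap.toSpanSingleton K Λ (bas (tOf l z.2.2.1 z.2.2.2)))
    else 0) ∘ₗ (bas.repr : Λ →ₗ[K] (PathLE V L →₀ K))

theorem uMap_bas_of_le (z : PathLE V L) (H : l ≤ z.2.2.1.length) :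
    uMap bas l hl (bas z) =
      Finsupp.single (qOf l hl z.2.2.1 H) (bas (tOf l z.2.2.1 z.2.2.2)) := by
  simp only [uMap, LinearMap.comp_apply, LinearEquiv.coe_coe, Module.Basis.repr_self,
    Finsupp.lsum_single, dif_pos H, LinearMap.coe_comp, Function.comp_apply,
    LinearMap.toSpanSingleton_apply, one_smul, Finsupp.lsingle_apply]

theorem uMap_bas_of_lt (z : PathLE V L) (H : ¬ l ≤ z.2.2.1.length) :
    uMap bas l hl (bas z) = 0 := by
  simp only [uMap, LinearMap.comp_apply, LinearEquiv.coe_coe, Module.Basis.repr_self,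
    Finsupp.lsum_single, dif_neg H, LinearMap.zero_apply]

include hmul in
theorem uMap_recon {x : Λ} (hx : x ∈ Tspan bas l) :
    ((uMap bas l hl x).sum fun q b => b * bas q.1) = x := by
  classical
  induction hx using Submodule.span_induction with
  | mem x hxm =>
    obtain ⟨a, b, p, hp, hlp, rfl⟩ := hxm
    rw [uMap_bas_of_le bas l hl ⟨a, b, ⟨p, hp⟩⟩ hlp]
    rw [Finsupp.sum_single_index (by rw [zero_mul])]
    -- bas (tOf ..) * bas (qOf ..).1 = bas z
    show bas (tOf l p hp) * bas (qOf l hl p hlp).1 = _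
    have key := hmul a (splitAt l p).1 b (splitAt l p).2.1 (splitAt l p).2.2
      (by rw [splitAt_fst_length l p hlp]; exact hl)
      (by rw [splitAt_snd_length]; omega)
    rw [dif_pos ?_] at key
    · show bas ⟨(splitAt l p).1, b, _⟩ * bas ⟨a, (splitAt l p).1, _⟩ = _
      rw [key]
      exact bas_congr bas a b _ p _ hp (splitAt_spec l p)
    · rw [splitAt_fst_length l p hlp, splitAt_snd_length]; omega
  | zero => simp
  | add x y _ _ h1 h2 =>
    rw [map_add, Finsupp.sum_add_index (fun _ _ => by rw [zero_mul])
      (fun _ _ _ _ => by rw [add_mul]), h1, h2]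
  | smul c x _ h =>
    rw [map_smul, Finsupp.sum_smul_index' (fun q => zero_mul (bas q.1))]
    simp only [smul_mul_assoc]
    rw [← Finsupp.smul_sum, h]

theorem uMap_single {a m b : V} (q1 : Quiver.Path a m) (q2 : Quiver.Path m b)
    (h1 : q1.length = l) (hc : (q1.comp q2).length ≤ L)
    (hq1L : q1.length ≤ L) (hq2L : q2.length ≤ L) :
    uMap bas l hl (bas ⟨a, b, ⟨q1.comp q2, hc⟩⟩) =
      Finsupp.single ⟨⟨a, m, ⟨q1, hq1L⟩⟩, h1⟩ (bas ⟨m, b, ⟨q2, hq2L⟩⟩) := by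
  have hrl : l ≤ (q1.comp q2).length := by rw [Quiver.Path.length_comp]; omega
  rw [uMap_bas_of_le bas l hl ⟨a, b, ⟨q1.comp q2, hc⟩⟩ hrl]
  have hsp := splitAt_comp_of_length l q1 q2 h1
  have gen : ∀ (x : Σ m' : V, Quiver.Path a m' × Quiver.Path m' b) (_ : x = ⟨m, (q1, q2)⟩)
      (hL1 : x.2.1.length ≤ L) (hl1 : x.2.1.length = l) (hL2 : x.2.2.length ≤ L),
      Finsupp.single (⟨⟨a, x.1, ⟨x.2.1, hL1⟩⟩, hl1⟩ : Dl V L l) (bas ⟨x.1, b, ⟨x.2.2, hL2⟩⟩) =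
      Finsupp.single ⟨⟨a, m, ⟨q1, hq1L⟩⟩, h1⟩ (bas ⟨m, b, ⟨q2, hq2L⟩⟩) := by
    rintro x rfl _ _ _; rfl
  exact gen (splitAt l (q1.comp q2)) hsp _ _ _

include hmul hmul0 in
theorem uMap_cong {x : Λ} (hx : x ∈ Tspan bas l) (a : Λ) (q : Dl V L l) :
    uMap bas l hl (a * x) q - a * uMap bas l hl x q ∈ radJ bas ^ (L + 1 - l) := by
  classical
  induction hx using Submodule.span_induction with
  | mem x hxm =>
    obtain ⟨a0, b0, r, hr, hrl, rfl⟩ := hxm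
    obtain ⟨m, q1, q2, h1, rfl⟩ :
        ∃ (m : V) (q1 : Quiver.Path a0 m) (q2 : Quiver.Path m b0),
          q1.length = l ∧ q1.comp q2 = r :=
      ⟨(splitAt l r).1, (splitAt l r).2.1, (splitAt l r).2.2,
        splitAt_fst_length l r hrl, splitAt_spec l r⟩
    have hlen12 : (q1.comp q2).length = l + q2.length := by
      rw [Quiver.Path.length_comp, h1]
    have hq1L : q1.length ≤ L := by omega
    have hq2L : q2.length ≤ L := by omega
    have ha : a ∈ Submodule.span K (Set.range bas) := by rw [bas.span_eq]; trivial
    induction ha using Submodule.span_induction with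
    | mem a ham =>
      obtain ⟨⟨a1, b1, s, hs⟩, rfl⟩ := ham
      by_cases hb : b0 = a1
      · subst hb
        rw [hmul a0 b0 b1 (q1.comp q2) s hr hs]
        by_cases hL2 : (q1.comp q2).length + s.length ≤ L
        · rw [dif_pos hL2]
          have PF2 : (q1.comp (q2.comp s)).length ≤ L := by
            rw [Quiver.Path.length_comp, Quiver.Path.length_comp]
            rw [Quiver.Path.length_comp] at hL2; omega
          have hq2sL : (q2.comp s).length ≤ L := by
            rw [Quiver.Path.length_comp]
            rw [Quiver.Path.length_comp] at hL2; omega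
          rw [bas_congr bas a0 b1 ((q1.comp q2).comp s) (q1.comp (q2.comp s)) _ PF2
            (Quiver.Path.comp_assoc q1 q2 s)]
          rw [uMap_single bas l hl q1 (q2.comp s) h1 PF2 hq1L hq2sL,
            uMap_single bas l hl q1 q2 h1 hr hq1L hq2L]
          by_cases hq : q = (⟨⟨a0, m, ⟨q1, hq1L⟩⟩, h1⟩ : Dl V L l)
          · rw [hq, Finsupp.single_eq_same, Finsupp.single_eq_same,
              hmul m b0 b1 q2 s hq2L hs,
              dif_pos (by rw [Quiver.Path.length_comp] at hq2sL; omega)]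
            rw [sub_eq_zero_of_eq (bas_congr bas m b1 _ _ hq2sL _ rfl)]
            exact zero_mem _
          · rw [Finsupp.single_eq_of_ne' (Ne.symm hq), Finsupp.single_eq_of_ne' (Ne.symm hq),
              mul_zero, sub_zero]
            exact zero_mem _
        · rw [dif_neg hL2, map_zero, Finsupp.zero_apply, zero_sub,
            uMap_single bas l hl q1 q2 h1 hr hq1L hq2L]
          by_cases hq : q = (⟨⟨a0, m, ⟨q1, hq1L⟩⟩, h1⟩ : Dl V L l)
          · rw [hq, Finsupp.single_eq_same, hmul m b0 b1 q2 s hq2L hs]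
            by_cases h3 : q2.length + s.length ≤ L
            · rw [dif_pos h3]
              refine neg_mem (bas_mem_pow bas hmul (L + 1 - l) _ _ ?_)
              rw [Quiver.Path.length_comp]
              omega
            · rw [dif_neg h3, neg_zero]
              exact zero_mem _
          · rw [Finsupp.single_eq_of_ne' (Ne.symm hq), mul_zero, neg_zero]
            exact zero_mem _
      · rw [hmul0 a0 b0 a1 b1 (q1.comp q2) s hr hs hb, map_zero, Finsupp.zero_apply, zero_sub,
          uMap_single bas l hl q1 q2 h1 hr hq1L hq2L]
        by_cases hq : q = (⟨⟨a0, m, ⟨q1, hq1L⟩⟩, h1⟩ : Dl V L l)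
        · rw [hq, Finsupp.single_eq_same,
            hmul0 m b0 a1 b1 q2 s hq2L hs hb, neg_zero]
          exact zero_mem _
        · rw [Finsupp.single_eq_of_ne' (Ne.symm hq), mul_zero, neg_zero]
          exact zero_mem _
    | zero =>
      simp only [zero_mul, map_zero, Finsupp.zero_apply, sub_zero]
      exact zero_mem _
    | add a1 a2 _ _ h1 h2 =>
      have heq : uMap bas l hl ((a1 + a2) * bas ⟨a0, b0, ⟨q1.comp q2, hr⟩⟩) q -
          (a1 + a2) * uMap bas l hl (bas ⟨a0, b0, ⟨q1.comp q2, hr⟩⟩) q =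
          (uMap bas l hl (a1 * bas ⟨a0, b0, ⟨q1.comp q2, hr⟩⟩) q -
            a1 * uMap bas l hl (bas ⟨a0, b0, ⟨q1.comp q2, hr⟩⟩) q) +
          (uMap bas l hl (a2 * bas ⟨a0, b0, ⟨q1.comp q2, hr⟩⟩) q -
            a2 * uMap bas l hl (bas ⟨a0, b0, ⟨q1.comp q2, hr⟩⟩) q) := by
        simp only [add_mul, map_add, Finsupp.add_apply]
        abel
      rw [heq]
      exact add_mem h1 h2
    | smul cc a1 _ h =>
      have heq : uMap bas l hl ((cc • a1) * bas ⟨a0, b0, ⟨q1.comp q2, hr⟩⟩) q -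
          (cc • a1) * uMap bas l hl (bas ⟨a0, b0, ⟨q1.comp q2, hr⟩⟩) q =
          cc • (uMap bas l hl (a1 * bas ⟨a0, b0, ⟨q1.comp q2, hr⟩⟩) q -
            a1 * uMap bas l hl (bas ⟨a0, b0, ⟨q1.comp q2, hr⟩⟩) q) := by
        simp only [smul_mul_assoc, map_smul, Finsupp.smul_apply, smul_sub]
      rw [heq, ← algebraMap_smul Λ cc]
      exact Submodule.smul_mem _ _ h
  | zero =>
    simp only [mul_zero, map_zero, Finsupp.zero_apply, sub_zero]
    exact zero_mem _
  | add x y _ _ h1 h2 =>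
    have heq : uMap bas l hl (a * (x + y)) q - a * uMap bas l hl (x + y) q =
        (uMap bas l hl (a * x) q - a * uMap bas l hl x q) +
        (uMap bas l hl (a * y) q - a * uMap bas l hl y q) := by
      simp only [mul_add, map_add, Finsupp.add_apply]
      abel
    rw [heq]
    exact add_mem h1 h2
  | smul cc x _ h =>
    have heq : uMap bas l hl (a * (cc • x)) q - a * uMap bas l hl (cc • x) q =
        cc • (uMap bas l hl (a * x) q - a * uMap bas l hl x q) := by
      simp only [mul_smul_comm, map_smul, Finsupp.smul_apply, smul_sub]
    rw [heq, ← algebraMap_smul Λ cc]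
    exact Submodule.smul_mem _ _ h

end Alg

/-- Let $Λ = KQ/⟨\text{paths of length } L+1⟩$ be a truncated path algebra (presented by a
multiplicative basis of paths of length $≤ L$) and $P$ a finitely generated projective
left $Λ$-module.  Then for $0 ≤ l ≤ L$, the module $J^l P$ is projective over the
truncated path algebra $Λ/J^{L+1-l}$ (realized as the quotient of $Λ$ by the ring
congruence identifying elements modulo $J^{L+1-l}$, with its induced action). -/
theorem stmt_9 {V : Type uV} [Quiver.{uE + 1} V] [Fintype V] {L : ℕ}
    {K Λ : Type*} [Field K] [Ring Λ] [Algebra K Λ]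
    (bas : Module.Basis (PathLE V L) K Λ)
    (hone : ∑ v : V, bas ⟨v, v, Quiver.Path.nil, Nat.zero_le L⟩ = 1)
    (hmul : ∀ (a b c : V) (p : Quiver.Path a b) (q : Quiver.Path b c)
        (hp : p.length ≤ L) (hq : q.length ≤ L),
      bas ⟨b, c, q, hq⟩ * bas ⟨a, b, p, hp⟩ =
        if h : p.length + q.length ≤ L then
          bas ⟨a, c, p.comp q, by rwa [Quiver.Path.length_comp]⟩ else 0)
    (hmul0 : ∀ (a b b' c : V) (p : Quiver.Path a b) (q : Quiver.Path b' c)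
        (hp : p.length ≤ L) (hq : q.length ≤ L), b ≠ b' →
      bas ⟨b', c, q, hq⟩ * bas ⟨a, b, p, hp⟩ = 0)
    (P : Type*) [AddCommGroup P] [Module Λ P]
    (hP : Module.Projective Λ P) (hfg : Module.Finite Λ P)
    (l : ℕ) (hl : l ≤ L)
    (c : RingCon Λ) (hc : ∀ x y : Λ, c x y ↔ x - y ∈ (radJ bas) ^ (L + 1 - l))
    [inst : Module c.Quotient ↥((radJ bas) ^ l • ⊤ : Submodule Λ P)]
    (hcompat : ∀ (a : Λ) (x : ↥((radJ bas) ^ l • ⊤ : Submodule Λ P)),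
      (RingCon.mk' c a) • x = a • x) :
    Module.Projective c.Quotient ↥((radJ bas) ^ l • ⊤ : Submodule Λ P) := by
  classical
  haveI := hP
  obtain ⟨n, π, hπ⟩ := Module.Finite.exists_fin' Λ P
  obtain ⟨h, hh⟩ := Module.projective_lifting_property π LinearMap.id hπ
  set y : Fin n → P := fun j => π fun k => if j = k then 1 else 0 with hy_def
  have hy : ∀ v : Fin n → Λ, π v = ∑ j, v j • y j := fun v =>
    LinearMap.pi_apply_eq_sum_univ π v
  have hTm : ∀ (m : P), m ∈ ((radJ bas) ^ l • ⊤ : Submodule Λ P) →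
      ∀ j, h m j ∈ Tspan bas l := by
    intro m hm
    refine Submodule.smul_induction_on hm ?_ ?_
    · intro r hr p _ j
      have hrw : h (r • p) j = r * h p j := by rw [map_smul]; rfl
      rw [hrw]
      have h0 : h p j ∈ Tspan bas 0 := by rw [Tspan_zero]; trivial
      have hmm := Tspan_mul bas hmul hmul0 (radJ_pow_le_Tspan bas hmul hmul0 l hr) h0
      rwa [add_zero] at hmm
    · intro x y h1 h2 j
      rw [map_add]
      exact add_mem (h1 j) (h2 j)
  have hsurj : ∀ abar : c.Quotient, ∃ a, RingCon.mk' c a = abar := fun abar => Quot.exists_rep abar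
  have hkey : ∀ (a x : Λ), x ∈ Tspan bas l → ∀ q : Dl V L l,
      (RingCon.mk' c) (uMap bas l hl (a * x) q) =
        (RingCon.mk' c) (a * uMap bas l hl x q) := by
    intro a x hx q
    have hmem := uMap_cong bas hmul hmul0 l hl hx a q
    rw [← hc] at hmem
    exact (RingCon.eq c).mpr hmem
  let ubar : Λ → (Dl V L l →₀ c.Quotient) := fun x =>
    Finsupp.mapRange (RingCon.mk' c) (map_zero _) (uMap bas l hl x)
  let iF : ↥((radJ bas) ^ l • ⊤ : Submodule Λ P) →ₗ[c.Quotient]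
      (Fin n → (Dl V L l →₀ c.Quotient)) := {
    toFun := fun mm => fun j => ubar (h mm.1 j)
    map_add' := by
      intro m1 m2
      funext j
      ext q
      simp only [ubar, Finsupp.mapRange_apply, Submodule.coe_add, map_add,
        Pi.add_apply, Finsupp.add_apply]
    map_smul' := by
      intro abar mm
      obtain ⟨a, rfl⟩ := hsurj abar
      funext j
      ext q
      have h1 : (RingCon.mk' c a • mm : ↥((radJ bas) ^ l • ⊤ : Submodule Λ P)) = a • mm :=
        hcompat a mm
      rw [RingHom.id_apply, h1]
      show (ubar (h ((a • mm : ↥((radJ bas) ^ l • ⊤ : Submodule Λ P)) : P) j)) q =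
        (RingCon.mk' c a • fun j => ubar (h mm.1 j)) j q
      have h2 : ((a • mm : ↥((radJ bas) ^ l • ⊤ : Submodule Λ P)) : P) = a • (mm : P) := rfl
      rw [h2, map_smul]
      show ubar (a * h mm.1 j) q = _
      simp only [ubar, Finsupp.mapRange_apply, Pi.smul_apply, Finsupp.smul_apply]
      rw [hkey a (h mm.1 j) (hTm mm.1 mm.2 j) q, map_mul]
      rfl }
  let w : Fin n → Dl V L l → ↥((radJ bas) ^ l • ⊤ : Submodule Λ P) := fun j q =>
    ⟨bas q.1 • y j,
      Submodule.smul_mem_smul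
        (bas_mem_pow bas hmul l q.1.2.2.1 q.1.2.2.2 q.2.ge) Submodule.mem_top⟩
  let sF : (Fin n → (Dl V L l →₀ c.Quotient)) →ₗ[c.Quotient]
      ↥((radJ bas) ^ l • ⊤ : Submodule Λ P) :=
    ∑ j : Fin n, (Finsupp.linearCombination c.Quotient (w j)).comp (LinearMap.proj j)
  refine Module.Projective.of_split iF sF ?_
  have hlc : ∀ (j : Fin n) (x : Λ), x ∈ Tspan bas l →
      ((Finsupp.linearCombination c.Quotient (w j) (ubar x) :
          ↥((radJ bas) ^ l • ⊤ : Submodule Λ P)) : P) = x • y j := by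
    intro j x hx
    rw [show ubar x = Finsupp.mapRange (RingCon.mk' c) (map_zero _) (uMap bas l hl x) from rfl]
    rw [Finsupp.linearCombination_apply, Finsupp.sum_mapRange_index (by simp)]
    rw [Finsupp.sum, AddSubmonoidClass.coe_finset_sum]
    have : ∀ q ∈ (uMap bas l hl x).support,
        ((RingCon.mk' c (uMap bas l hl x q) • w j q :
            ↥((radJ bas) ^ l • ⊤ : Submodule Λ P)) : P) =
          (uMap bas l hl x q * bas q.1) • y j := by
      intro q _
      rw [hcompat]
      show (uMap bas l hl x q) • (bas q.1 • y j) = _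
      rw [smul_smul]
    rw [Finset.sum_congr rfl this, ← Finset.sum_smul]
    rw [show (∑ q ∈ (uMap bas l hl x).support, uMap bas l hl x q * bas q.1) =
      ((uMap bas l hl x).sum fun q b => b * bas q.1) from rfl]
    rw [uMap_recon bas hmul l hl hx]
  apply LinearMap.ext
  intro mm
  apply Subtype.ext
  show ((sF (iF mm) : ↥((radJ bas) ^ l • ⊤ : Submodule Λ P)) : P) = (mm : P)
  have hsF : sF (iF mm) = ∑ j : Fin n,
      Finsupp.linearCombination c.Quotient (w j) (ubar (h mm.1 j)) := by
    simp only [sF, LinearMap.sum_apply, LinearMap.comp_apply, LinearMap.proj_apply]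
    rfl
  rw [hsF, AddSubmonoidClass.coe_finset_sum]
  have : ∀ j ∈ Finset.univ, ((Finsupp.linearCombination c.Quotient (w j) (ubar (h mm.1 j)) :
      ↥((radJ bas) ^ l • ⊤ : Submodule Λ P)) : P) = (h mm.1 j) • y j :=
    fun j _ => hlc j (h mm.1 j) (hTm mm.1 mm.2 j)
  rw [Finset.sum_congr rfl this, ← hy (h mm.1)]
  have := LinearMap.ext_iff.mp hh mm.1
  simpa using this
end

section
/- Let $\Lambda = KQ/\langle\text{paths of length } L+1\rangle$ be a truncated path algebra, $P$ a finitely generated projective left $\Lambda$-module, and $0 \le l \le L$. If $V, W$ are $KQ_0$-submodules of $J^lP$ with $J^lP = V \oplus W \oplus J^{l+1}P$, then $J^{l+1}P = (Q_1\cdot V) \oplus (Q_1\cdot W) \oplus J^{l+2}P$, where $Q_1\cdot U$ denotes the $K$-span of all $\alpha u$ with $\alpha$ an arrow and $u \in U$. -/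
universe uV uE

/-- For a subset `U` of a `Λ`-module `P`, the `K`-span `Q₁ · U` of all elements `α • u`
with `α` an arrow of the quiver and `u ∈ U`. -/
def arrowSpan {V : Type uV} [Quiver.{uE + 1} V] {L : ℕ} {K Λ : Type*} [Field K] [Ring Λ]
    [Algebra K Λ] (bas : Module.Basis (PathLE V L) K Λ) (h1 : 1 ≤ L)
    {P : Type*} [AddCommGroup P] [Module K P] [Module Λ P] (U : Set P) : Submodule K P :=
  Submodule.span K {y | ∃ (a b : V) (α : a ⟶ b) (u : P), u ∈ U ∧
    y = bas ⟨a, b, α.toPath, by simpa [Quiver.Hom.toPath] using h1⟩ • u}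

namespace Stmt10

open Submodule Quiver

lemma smul_pow_succ' {R : Type*} [Ring R] (I : Ideal R) {M : Type*} [AddCommGroup M]
    [Module R M] : ∀ (n : ℕ) (N : Submodule R M), I ^ (n + 1) • N = I • (I ^ n • N)
  | 0, N => by
    rw [Submodule.pow_one, Submodule.pow_zero, Ideal.one_eq_top, Submodule.top_smul]
  | n + 1, N => by
    calc I ^ (n + 1 + 1) • N = (I ^ (n + 1) * I) • N := by rw [Submodule.pow_succ]
      _ = (I ^ (n + 1) • I) • N := by rw [Ideal.smul_eq_mul]
      _ = I ^ (n + 1) • (I • N) := Submodule.smul_assoc _ _ _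
      _ = I • (I ^ n • (I • N)) := smul_pow_succ' I n (I • N)
      _ = I • ((I ^ n • I) • N) := by rw [Submodule.smul_assoc]
      _ = I • ((I ^ n * I) • N) := by rw [Ideal.smul_eq_mul]
      _ = I • (I ^ (n + 1) • N) := by rw [Submodule.pow_succ]

variable {Vq : Type uV} [Quiver.{uE + 1} Vq] {L : ℕ} {K Λ : Type*} [Field K] [Ring Λ]
    [Algebra K Λ] (bas : Module.Basis (PathLE Vq L) K Λ)

def pdeg (i : PathLE Vq L) : ℕ := i.2.2.1.length

lemma pdeg_le (i : PathLE Vq L) : pdeg i ≤ L := i.2.2.2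

def Sdeg (m : ℕ) : Submodule K Λ := Submodule.span K (bas '' {i | m ≤ pdeg i})

lemma mem_Sdeg {m : ℕ} {x : Λ} :
    x ∈ Sdeg bas m ↔ ∀ i, bas.repr x i ≠ 0 → m ≤ pdeg i := by
  rw [Sdeg, Module.Basis.mem_span_image]
  constructor
  · intro h i hi
    exact h (Finsupp.mem_support_iff.2 hi)
  · intro h i hi
    exact h i (Finsupp.mem_support_iff.1 hi)

lemma basis_mem_Sdeg {m : ℕ} (i : PathLE Vq L) (h : m ≤ pdeg i) : bas i ∈ Sdeg bas m :=
  Submodule.subset_span ⟨i, h, rfl⟩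

lemma Sdeg_mono {m m' : ℕ} (h : m ≤ m') : Sdeg bas m' ≤ Sdeg bas m :=
  Submodule.span_mono (Set.image_mono fun i hi => le_trans h hi)

lemma mem_Sdeg_zero (x : Λ) : x ∈ Sdeg bas 0 :=
  (mem_Sdeg bas).2 fun i _ => Nat.zero_le _

lemma Sdeg_eq_bot {m : ℕ} (h : L < m) : ∀ x ∈ Sdeg bas m, x = 0 := by
  intro x hx
  have : bas.repr x = 0 := by
    ext i
    by_contra hi
    exact absurd ((mem_Sdeg bas).1 hx i hi) (by have := pdeg_le i; omega)
  have := congrArg bas.repr.symm this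
  simpa using this

section Mul

variable (hmul : ∀ (a b c : Vq) (p : Quiver.Path a b) (q : Quiver.Path b c)
        (hp : p.length ≤ L) (hq : q.length ≤ L),
      bas ⟨b, c, q, hq⟩ * bas ⟨a, b, p, hp⟩ =
        if h : p.length + q.length ≤ L then
          bas ⟨a, c, p.comp q, by rwa [Quiver.Path.length_comp]⟩ else 0)
    (hmul0 : ∀ (a b b' c : Vq) (p : Quiver.Path a b) (q : Quiver.Path b' c)
        (hp : p.length ≤ L) (hq : q.length ≤ L), b ≠ b' →
      bas ⟨b', c, q, hq⟩ * bas ⟨a, b, p, hp⟩ = 0)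

include hmul hmul0 in
lemma basis_mul_basis_mem (i j : PathLE Vq L) :
    bas j * bas i ∈ Sdeg bas (pdeg i + pdeg j) := by
  obtain ⟨a, b, p, hp⟩ := i
  obtain ⟨b', c, q, hq⟩ := j
  by_cases hb : b = b'
  · subst hb
    rw [hmul]
    split
    · exact basis_mem_Sdeg bas _ (by simp [pdeg, Quiver.Path.length_comp])
    · exact zero_mem _
  · rw [hmul0 _ _ _ _ _ _ _ _ hb]
    exact zero_mem _

include hmul hmul0 in
lemma mul_mem_Sdeg {m n : ℕ} {x y : Λ} (hx : x ∈ Sdeg bas m) (hy : y ∈ Sdeg bas n) :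
    y * x ∈ Sdeg bas (m + n) := by
  induction hx using Submodule.span_induction with
  | mem z hz =>
    obtain ⟨i, him, rfl⟩ := hz
    induction hy using Submodule.span_induction with
    | mem w hw =>
      obtain ⟨j, hjn, rfl⟩ := hw
      exact Sdeg_mono bas (add_le_add him hjn) (basis_mul_basis_mem bas hmul hmul0 i j)
    | zero => rw [zero_mul]; exact zero_mem _
    | add u v _ _ hu hv => rw [add_mul]; exact add_mem hu hv
    | smul c u _ hu => rw [smul_mul_assoc]; exact Submodule.smul_mem _ c hu
  | zero => rw [mul_zero]; exact zero_mem _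
  | add u v _ _ hu hv => rw [mul_add]; exact add_mem hu hv
  | smul c u _ hu => rw [mul_smul_comm]; exact Submodule.smul_mem _ c hu

include hmul hmul0 in
lemma mul_mem_Sdeg_left {m : ℕ} {x : Λ} (y : Λ) (hx : x ∈ Sdeg bas m) :
    y * x ∈ Sdeg bas m := by
  simpa using mul_mem_Sdeg bas hmul hmul0 hx (mem_Sdeg_zero bas y)

include hmul hmul0 in
lemma mul_mem_Sdeg_right {m : ℕ} {x : Λ} (y : Λ) (hx : x ∈ Sdeg bas m) :
    x * y ∈ Sdeg bas m := by
  simpa using mul_mem_Sdeg bas hmul hmul0 (mem_Sdeg_zero bas y) hx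

/-- `Sdeg` as an ideal. -/
def SdegI (m : ℕ) : Ideal Λ where
  carrier := Sdeg bas m
  add_mem' := add_mem
  zero_mem' := zero_mem _
  smul_mem' := fun c x hx => by
    rw [smul_eq_mul]; exact mul_mem_Sdeg_left bas hmul hmul0 c hx

include hmul hmul0 in
lemma radJ_le_SdegI : radJ bas ≤ SdegI bas hmul hmul0 1 := by
  rw [radJ, Ideal.span_le]
  rintro x ⟨a, b, p, hp, hpos, rfl⟩
  exact basis_mem_Sdeg bas _ hpos

include hmul hmul0 in
lemma radJ_pow_le (m : ℕ) : radJ bas ^ m ≤ SdegI bas hmul hmul0 m := by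
  induction m with
  | zero =>
    rw [Submodule.pow_zero, Ideal.one_eq_top]
    exact fun x _ => mem_Sdeg_zero bas x
  | succ n ih =>
    rw [Submodule.pow_succ]
    refine Ideal.mul_le.2 fun r hr t ht => ?_
    have h1 : t ∈ Sdeg bas 1 := radJ_le_SdegI bas hmul hmul0 ht
    have h2 : r ∈ Sdeg bas n := ih hr
    have := mul_mem_Sdeg bas hmul hmul0 h1 h2
    rwa [Nat.add_comm] at this

include hmul in
lemma basis_cons_factor {a c b : Vq} (p' : Quiver.Path a c) (e : c ⟶ b)
    (hp : (p'.cons e).length ≤ L) (h1 : e.toPath.length ≤ L) (h2 : p'.length ≤ L) :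
    bas ⟨a, b, ⟨p'.cons e, hp⟩⟩ = bas ⟨c, b, ⟨e.toPath, h1⟩⟩ * bas ⟨a, c, ⟨p', h2⟩⟩ := by
  rw [hmul]
  rw [dif_pos (by simpa [Quiver.Hom.toPath] using hp)]
  have hcomp : p'.comp e.toPath = p'.cons e := by
    simp [Quiver.Hom.toPath]
  exact (congrArg (fun z => bas ⟨a, b, z⟩) (Subtype.ext hcomp)).symm

include hmul in
lemma arrow_mem_radJ {a b : Vq} (e : a ⟶ b) (h1 : e.toPath.length ≤ L) :
    bas ⟨a, b, ⟨e.toPath, h1⟩⟩ ∈ radJ bas :=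
  Ideal.subset_span ⟨a, b, e.toPath, h1, by simp [Quiver.Hom.toPath], rfl⟩

abbrev Arr (V : Type uV) [Quiver.{uE + 1} V] := Σ a b : V, a ⟶ b

/-- idempotent at vertex `v` -/
noncomputable def ee (v : Vq) : Λ := bas ⟨v, v, Quiver.Path.nil, Nat.zero_le L⟩

/-- the basis element of an arrow -/
noncomputable def arr (h1 : 1 ≤ L) (α : Arr Vq) : Λ :=
  bas ⟨α.1, α.2.1, α.2.2.toPath, by simpa [Quiver.Hom.toPath] using h1⟩

include hmul in
lemma ee_mul (i : PathLE Vq L) : ee bas i.2.1 * bas i = bas i := by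
  obtain ⟨a, b, p, hp⟩ := i
  show bas ⟨b, b, Quiver.Path.nil, Nat.zero_le L⟩ * bas ⟨a, b, p, hp⟩ = _
  refine (hmul _ _ _ _ _ _ _).trans ?_
  rw [dif_pos (by simpa using hp)]
  exact congrArg (fun z => bas ⟨a, b, z⟩) (Subtype.ext (by simp))

include hmul0 in
lemma ee_mul_ne {v : Vq} (i : PathLE Vq L) (h : i.2.1 ≠ v) : ee bas v * bas i = 0 := by
  obtain ⟨a, b, p, hp⟩ := i
  exact hmul0 a b v v p Quiver.Path.nil hp (Nat.zero_le L) h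

include hmul in
lemma ee_idem (v : Vq) : ee bas v * ee bas v = ee bas v := ee_mul bas hmul ⟨v, v, Quiver.Path.nil, Nat.zero_le L⟩

include hmul in
lemma arr_mul_ee (h1 : 1 ≤ L) (α : Arr Vq) : arr bas h1 α * ee bas α.1 = arr bas h1 α := by
  show bas ⟨α.1, α.2.1, α.2.2.toPath, _⟩ * bas ⟨α.1, α.1, Quiver.Path.nil, _⟩ = _
  refine (hmul _ _ _ _ _ _ _).trans ?_
  rw [dif_pos (by simpa [Quiver.Hom.toPath] using h1)]
  exact congrArg (fun z => bas ⟨α.1, α.2.1, z⟩) (Subtype.ext (by simp [Quiver.Hom.toPath]))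

include hmul hmul0 in
lemma repr_e_fixed {x : Λ} {v : Vq} (hx : ee bas v * x = x) (i : PathLE Vq L)
    (h : i.2.1 ≠ v) : bas.repr x i = 0 := by
  let φ : Λ →ₗ[K] K :=
    Finsupp.lapply i ∘ₗ bas.repr.toLinearMap ∘ₗ LinearMap.mulLeft K (ee bas v)
  have hφ : φ = 0 := by
    refine Module.Basis.ext bas fun j => ?_
    simp only [φ, LinearMap.comp_apply, LinearMap.mulLeft_apply, LinearMap.zero_apply]
    by_cases hj : j.2.1 = v
    · subst hj
      rw [ee_mul bas hmul j]
      classical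
      rw [LinearEquiv.coe_toLinearMap, Module.Basis.repr_self, Finsupp.lapply_apply,
        Finsupp.single_apply]
      rw [if_neg]
      intro hji
      exact h (by rw [← hji])
    · rw [ee_mul_ne bas hmul0 j hj]
      simp
  have : φ x = 0 := by rw [hφ]; rfl
  simpa only [φ, LinearMap.comp_apply, LinearMap.mulLeft_apply, hx, Finsupp.lapply_apply,
    LinearEquiv.coe_coe] using this

/-- injectivity of appending an arrow to a path, on basis indices -/
lemma pathle_comp_inj {a a' u u' b b' : Vq} (p : Quiver.Path a u) (p' : Quiver.Path a' u')
    (e : u ⟶ b) (e' : u' ⟶ b') {h : (p.comp e.toPath).length ≤ L}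
    {h' : (p'.comp e'.toPath).length ≤ L}
    (heq : (⟨a, b, ⟨p.comp e.toPath, h⟩⟩ : PathLE Vq L) = ⟨a', b', ⟨p'.comp e'.toPath, h'⟩⟩) :
    a = a' ∧ b = b' ∧ u = u' ∧ HEq p p' ∧ HEq e e' := by
  obtain ⟨h1, h2⟩ := Sigma.mk.inj_iff.1 heq
  subst h1
  obtain ⟨h3, h4⟩ := Sigma.mk.inj_iff.1 (eq_of_heq h2)
  subst h3
  have h6 : p.comp e.toPath = p'.comp e'.toPath := congrArg Subtype.val (eq_of_heq h4)
  simp only [Quiver.Hom.toPath, Quiver.Path.comp_cons, Quiver.Path.comp_nil] at h6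
  have hu : u = u' := Quiver.Path.obj_eq_of_cons_eq_cons h6
  subst hu
  exact ⟨rfl, rfl, rfl, Quiver.Path.heq_of_cons_eq_cons h6,
    Quiver.Path.hom_heq_of_cons_eq_cons h6⟩

include hmul hmul0 in
lemma core (h1 : 1 ≤ L) {l : ℕ} (hlL : l + 1 ≤ L) (s : Finset (Arr Vq)) (μ : Arr Vq → Λ)
    (hdeg : ∀ α ∈ s, μ α ∈ Sdeg bas l)
    (hfix : ∀ α ∈ s, ee bas α.1 * μ α = μ α)
    (hsum : (∑ α ∈ s, arr bas h1 α * μ α) ∈ Sdeg bas (l + 2)) :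
    ∀ α ∈ s, μ α ∈ Sdeg bas (l + 1) := by
  classical
  intro α₀ hα₀
  rw [mem_Sdeg]
  intro i hi
  by_contra hcon
  have hl_le : l ≤ pdeg i := (mem_Sdeg bas).1 (hdeg α₀ hα₀) i hi
  have hiv : i.2.1 = α₀.1 := by
    by_contra hne
    exact hi (repr_e_fixed bas hmul hmul0 (hfix α₀ hα₀) i hne)
  obtain ⟨a, c, p, hp⟩ := i
  obtain ⟨a₀, b₀, e₀⟩ := α₀
  dsimp only at hiv
  subst hiv
  have hpl : p.length = l := by
    simp only [pdeg] at hl_le hcon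
    omega
  have hj₀len : (p.comp e₀.toPath).length ≤ L := by
    simp only [Quiver.Path.length_comp, Quiver.Hom.toPath, Quiver.Path.length_cons,
      Quiver.Path.length_nil]
    omega
  set j₀ : PathLE Vq L := ⟨a, b₀, ⟨p.comp e₀.toPath, hj₀len⟩⟩ with hj₀def
  let φ : Λ →ₗ[K] K := Finsupp.lapply j₀ ∘ₗ bas.repr.toLinearMap
  have key : ∀ α : Arr Vq, ∀ y : Λ,
      φ (arr bas h1 α * y) =
        if α = ⟨c, b₀, e₀⟩ then bas.repr y ⟨a, c, ⟨p, hp⟩⟩ else 0 := by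
    intro α y
    have hbas : ∀ j : PathLE Vq L,
        φ (arr bas h1 α * bas j) =
          if α = ⟨c, b₀, e₀⟩ ∧ j = ⟨a, c, ⟨p, hp⟩⟩ then 1 else 0 := by
      intro j
      obtain ⟨a', c', q, hq⟩ := j
      obtain ⟨aα, bα, e⟩ := α
      by_cases hc : c' = aα
      · subst hc
        show φ (bas ⟨c', bα, ⟨e.toPath, _⟩⟩ * bas ⟨a', c', ⟨q, hq⟩⟩) = _
        rw [hmul]
        by_cases hlen : q.length + e.toPath.length ≤ L
        · rw [dif_pos hlen]
          have hiff : (⟨a', bα, ⟨q.comp e.toPath, by rwa [Quiver.Path.length_comp]⟩⟩ :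
                PathLE Vq L) = j₀ ↔
              ((⟨c', bα, e⟩ : Arr Vq) = ⟨c, b₀, e₀⟩ ∧
                (⟨a', c', ⟨q, hq⟩⟩ : PathLE Vq L) = ⟨a, c, ⟨p, hp⟩⟩) := by
            constructor
            · intro hk
              rw [hj₀def] at hk
              obtain ⟨ha, hb, hcv, hpp, hee⟩ := pathle_comp_inj q p e e₀ hk
              subst ha; subst hb; subst hcv
              have hq0 : q = p := eq_of_heq hpp
              subst hq0
              have he0 : e = e₀ := eq_of_heq hee
              subst he0
              exact ⟨rfl, rfl⟩
            · rintro ⟨hα, hj⟩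
              obtain ⟨h1', h2'⟩ := Sigma.mk.inj_iff.1 hα
              subst h1'
              obtain ⟨h3', h4'⟩ := Sigma.mk.inj_iff.1 (eq_of_heq h2')
              subst h3'
              have he0 : e = e₀ := eq_of_heq h4'
              subst he0
              obtain ⟨g1, g2⟩ := Sigma.mk.inj_iff.1 hj
              subst g1
              obtain ⟨g3, g4⟩ := Sigma.mk.inj_iff.1 (eq_of_heq g2)
              have hq0 : q = p := congrArg Subtype.val (eq_of_heq g4)
              subst hq0
              rw [hj₀def]
          simp only [φ, LinearMap.comp_apply, LinearEquiv.coe_toLinearMap, Module.Basis.repr_self,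
            Finsupp.lapply_apply, Finsupp.single_apply]
          rw [if_congr hiff rfl rfl]
        · rw [dif_neg hlen, map_zero, if_neg]
          rintro ⟨hα, hj⟩
          apply hlen
          have hql : q.length = p.length := by
            have := congrArg pdeg hj
            simpa [pdeg] using this
          simp only [Quiver.Hom.toPath, Quiver.Path.length_cons, Quiver.Path.length_nil]
          omega
      · rw [show arr bas h1 ⟨aα, bα, e⟩ * bas ⟨a', c', ⟨q, hq⟩⟩ = 0 from
            hmul0 a' c' aα bα q e.toPath hq (by simpa [Quiver.Hom.toPath] using h1) hc,
          map_zero, if_neg]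
        rintro ⟨hα, hj⟩
        exact hc ((congrArg (fun j : PathLE Vq L => j.2.1) hj).trans
          (congrArg (fun β : Arr Vq => β.1) hα).symm)
    conv_lhs => rw [← Module.Basis.linearCombination_repr bas y, Finsupp.linearCombination_apply]
    rw [Finsupp.mul_sum, map_finsuppSum]
    classical
    have hterm : ∀ (j : PathLE Vq L) (cj : K),
        φ (arr bas h1 α * cj • bas j) =
          if α = ⟨c, b₀, e₀⟩ ∧ j = ⟨a, c, ⟨p, hp⟩⟩ then cj else 0 := by
      intro j cj
      rw [mul_smul_comm, map_smul, hbas j, smul_ite, smul_eq_mul, mul_one, smul_zero]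
    have hcongr : ((bas.repr y).sum fun j cj => φ (arr bas h1 α * cj • bas j)) =
        (bas.repr y).sum fun j cj =>
          if α = ⟨c, b₀, e₀⟩ ∧ j = ⟨a, c, ⟨p, hp⟩⟩ then cj else 0 :=
      Finsupp.sum_congr (fun j _ => hterm j _)
    rw [hcongr]
    by_cases hα : α = ⟨c, b₀, e₀⟩
    · simp only [hα, true_and, if_pos]
      rw [Finsupp.sum]
      rw [Finset.sum_ite_eq' (bas.repr y).support (⟨a, c, ⟨p, hp⟩⟩ : PathLE Vq L)
        (fun j => bas.repr y j)]
      by_cases hs : (⟨a, c, ⟨p, hp⟩⟩ : PathLE Vq L) ∈ (bas.repr y).support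
      · rw [if_pos hs]
      · rw [if_neg hs, eq_comm]
        exact Finsupp.notMem_support_iff.1 hs
    · simp only [hα, false_and, if_false]
      exact Finset.sum_const_zero
  have hφ0 : φ (∑ α ∈ s, arr bas h1 α * μ α) = 0 := by
    have hj₀deg : pdeg j₀ = l + 1 := by
      show (p.comp e₀.toPath).length = l + 1
      simp [pdeg, hj₀def, Quiver.Path.length_comp, Quiver.Hom.toPath, hpl]
    by_contra h0
    have h0' : bas.repr (∑ α ∈ s, arr bas h1 α * μ α) j₀ ≠ 0 := by
      simpa [φ] using h0
    have := (mem_Sdeg bas).1 hsum j₀ h0'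
    omega
  rw [map_sum, Finset.sum_congr rfl (fun α _ => key α (μ α)),
    Finset.sum_ite_eq' s (⟨c, b₀, e₀⟩ : Arr Vq)
      (fun α => bas.repr (μ α) ⟨a, c, ⟨p, hp⟩⟩), if_pos hα₀] at hφ0
  exact hi hφ0

section ModuleSide

variable {P : Type*} [AddCommGroup P] [Module K P] [Module Λ P] [IsScalarTower K Λ P]

include hmul hmul0 in
lemma Sdeg_smul_mem : ∀ (m : ℕ) (x : Λ), x ∈ Sdeg bas m → ∀ z : P,
    x • z ∈ (radJ bas ^ m • ⊤ : Submodule Λ P) := by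
  intro m
  induction m with
  | zero =>
    intro x _ z
    rw [Submodule.pow_zero, Ideal.one_eq_top, Submodule.top_smul]
    trivial
  | succ n ih =>
    intro x hx z
    induction hx using Submodule.span_induction with
    | mem y hy =>
      obtain ⟨i, him, rfl⟩ := hy
      obtain ⟨a, b, p, hp⟩ := i
      cases p with
      | nil => simp [pdeg] at him
      | @cons cmid _ p' e =>
        have hlen : p'.length + 1 ≤ L := by simpa using hp
        have h1' : e.toPath.length ≤ L := by
          simpa [Quiver.Hom.toPath] using (by omega : 1 ≤ L)
        have h2 : p'.length ≤ L := by omega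
        rw [basis_cons_factor bas hmul p' e hp h1' h2, mul_smul, smul_pow_succ']
        refine Submodule.smul_mem_smul (arrow_mem_radJ bas hmul e h1') ?_
        have him' : n + 1 ≤ p'.length + 1 := him
        refine ih _ (basis_mem_Sdeg bas ⟨a, cmid, ⟨p', h2⟩⟩ ?_) z
        show n ≤ p'.length
        omega
    | zero => rw [zero_smul]; exact zero_mem _
    | add u v _ _ hu hv => rw [add_smul]; exact add_mem hu hv
    | smul cc u _ hu =>
      rw [smul_assoc, ← algebraMap_smul Λ cc (u • z)]
      exact Submodule.smul_mem _ _ hu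

include hmul hmul0 in
lemma mem_RJ_iff (ι : P →ₗ[Λ] (P →₀ Λ))
    (hι : Function.LeftInverse (Finsupp.linearCombination Λ id) ι) (m : ℕ) (x : P) :
    x ∈ (radJ bas ^ m • ⊤ : Submodule Λ P) ↔ ∀ z, ι x z ∈ Sdeg bas m := by
  constructor
  · intro hx
    refine Submodule.smul_induction_on hx ?_ ?_
    · intro r hr n _ z
      rw [map_smul, Finsupp.smul_apply, smul_eq_mul]
      exact mul_mem_Sdeg_right bas hmul hmul0 _ (radJ_pow_le bas hmul hmul0 m hr)
    · intro u v hu hv z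
      rw [map_add, Finsupp.add_apply]
      exact add_mem (hu z) (hv z)
  · intro h
    rw [← hι x, Finsupp.linearCombination_apply, Finsupp.sum]
    refine Submodule.sum_mem _ fun z hz => ?_
    exact Sdeg_smul_mem bas hmul hmul0 m _ (h z) z

include hmul in
lemma mem_arrowSpan_strong (h1 : 1 ≤ L) (U : Submodule K P)
    (hUstab : ∀ v : Vq, ∀ x ∈ U, ee bas v • x ∈ U) {x : P}
    (hx : x ∈ arrowSpan bas h1 (U : Set P)) :
    ∃ (s : Finset (Arr Vq)) (u : Arr Vq → P), (∀ α, u α ∈ U) ∧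
      (∀ α, ee bas α.1 • u α = u α) ∧ x = ∑ α ∈ s, arr bas h1 α • u α := by
  classical
  induction hx using Submodule.span_induction with
  | mem y hy =>
    obtain ⟨a, b, α, u, hu, rfl⟩ := hy
    refine ⟨{⟨a, b, α⟩}, fun β => ee bas β.1 • u, fun β => hUstab _ _ hu, fun β => ?_, ?_⟩
    · rw [← mul_smul, ee_idem bas hmul]
    · rw [Finset.sum_singleton, ← mul_smul, arr_mul_ee bas hmul h1]
      rfl
  | zero => exact ⟨∅, fun _ => 0, fun _ => zero_mem _, fun _ => smul_zero _, by simp⟩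
  | add x y hx hy ihx ihy =>
    obtain ⟨s₁, u₁, hu₁, he₁, rfl⟩ := ihx
    obtain ⟨s₂, u₂, hu₂, he₂, rfl⟩ := ihy
    refine ⟨s₁ ∪ s₂, fun β => (if β ∈ s₁ then u₁ β else 0) + (if β ∈ s₂ then u₂ β else 0),
      fun β => add_mem (by split <;> simp [hu₁ β]) (by split <;> simp [hu₂ β]),
      fun β => by rw [smul_add]; congr 1 <;> split <;> simp [he₁ β, he₂ β], ?_⟩
    simp only [smul_add, Finset.sum_add_distrib, smul_ite, smul_zero]
    rw [Finset.sum_ite_mem, Finset.sum_ite_mem, Finset.union_inter_cancel_left,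
      Finset.union_inter_cancel_right]
  | smul cc x hx ihx =>
    obtain ⟨s, u, hu, he, rfl⟩ := ihx
    refine ⟨s, fun β => cc • u β, fun β => U.smul_mem cc (hu β), fun β => ?_, ?_⟩
    · rw [smul_comm, he β]
    · rw [Finset.smul_sum]
      exact Finset.sum_congr rfl fun β _ => (smul_comm _ _ _)

include hmul in
lemma arrowSpan_le_RJ (h1 : 1 ≤ L) (U : Submodule K P) (l : ℕ)
    (hU : ∀ u ∈ U, u ∈ (radJ bas ^ l • ⊤ : Submodule Λ P)) :
    arrowSpan bas h1 (U : Set P) ≤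
      ((radJ bas ^ (l + 1) • ⊤ : Submodule Λ P)).restrictScalars K := by
  refine Submodule.span_le.2 ?_
  rintro y ⟨a, b, α, u, hu, rfl⟩
  have harr := arrow_mem_radJ bas hmul α
    (by simpa [Quiver.Hom.toPath] using h1 : α.toPath.length ≤ L)
  simp only [SetLike.mem_coe, Submodule.restrictScalars_mem]
  rw [smul_pow_succ']
  exact Submodule.smul_mem_smul harr (hU u hu)

include hmul hmul0 in
lemma master (h1 : 1 ≤ L) (ι : P →ₗ[Λ] (P →₀ Λ))
    (hι : Function.LeftInverse (Finsupp.linearCombination Λ id) ι)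
    (l : ℕ) (V' W' : Submodule K P)
    (hV'stab : ∀ v : Vq, ∀ x ∈ V', ee bas v • x ∈ V')
    (hW'stab : ∀ v : Vq, ∀ x ∈ W', ee bas v • x ∈ W')
    (hVle : V' ≤ (radJ bas ^ l • ⊤ : Submodule Λ P).restrictScalars K)
    (hWle : W' ≤ (radJ bas ^ l • ⊤ : Submodule Λ P).restrictScalars K)
    (hdisj₁ : Disjoint V'
      (W' ⊔ ((radJ bas ^ (l + 1) • ⊤ : Submodule Λ P).restrictScalars K)))
    (hdisj₂ : Disjoint W' ((radJ bas ^ (l + 1) • ⊤ : Submodule Λ P).restrictScalars K)) :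
    ∀ x ∈ arrowSpan bas h1 (V' : Set P), ∀ y ∈ arrowSpan bas h1 (W' : Set P),
      x + y ∈ (radJ bas ^ (l + 2) • ⊤ : Submodule Λ P) → x = 0 ∧ y = 0 := by
  classical
  by_cases hlL : l + 1 ≤ L
  case neg =>
    have hbot : (radJ bas ^ (l + 1) • ⊤ : Submodule Λ P) = ⊥ := by
      have hI : radJ bas ^ (l + 1) = ⊥ := by
        refine (Submodule.eq_bot_iff _).2 fun x hx => ?_
        exact Sdeg_eq_bot bas (by omega) x (radJ_pow_le bas hmul hmul0 _ hx)
      rw [hI, Submodule.bot_smul]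
    intro x hx y hy _
    have hx' := arrowSpan_le_RJ bas hmul h1 V' l (fun u hu => hVle hu) hx
    have hy' := arrowSpan_le_RJ bas hmul h1 W' l (fun u hu => hWle hu) hy
    rw [hbot] at hx' hy'
    exact ⟨hx', hy'⟩
  case pos =>
    intro x hx y hy hxy
    obtain ⟨s₁, v, hv, hev, rfl⟩ := mem_arrowSpan_strong bas hmul h1 V' hV'stab hx
    obtain ⟨s₂, w, hw, hew, rfl⟩ := mem_arrowSpan_strong bas hmul h1 W' hW'stab hy
    set v' : Arr Vq → P := fun β => if β ∈ s₁ then v β else 0 with hv'def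
    set w' : Arr Vq → P := fun β => if β ∈ s₂ then w β else 0 with hw'def
    have hxv : ∑ α ∈ s₁, arr bas h1 α • v α = ∑ α ∈ s₁ ∪ s₂, arr bas h1 α • v' α := by
      simp only [hv'def, smul_ite, smul_zero]
      rw [Finset.sum_ite_mem, Finset.union_inter_cancel_left]
    have hyw : ∑ α ∈ s₂, arr bas h1 α • w α = ∑ α ∈ s₁ ∪ s₂, arr bas h1 α • w' α := by
      simp only [hw'def, smul_ite, smul_zero]
      rw [Finset.sum_ite_mem, Finset.union_inter_cancel_right]
    have hv'mem : ∀ β, v' β ∈ V' := fun β => by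
      simp only [hv'def]; split; exacts [hv β, zero_mem _]
    have hw'mem : ∀ β, w' β ∈ W' := fun β => by
      simp only [hw'def]; split; exacts [hw β, zero_mem _]
    have hev' : ∀ β, ee bas β.1 • v' β = v' β := fun β => by
      simp only [hv'def]; split; exacts [hev β, smul_zero _]
    have hew' : ∀ β, ee bas β.1 • w' β = w' β := fun β => by
      simp only [hw'def]; split; exacts [hew β, smul_zero _]
    have hsum2 : ∑ α ∈ s₁ ∪ s₂, arr bas h1 α • (v' α + w' α) ∈
        (radJ bas ^ (l + 2) • ⊤ : Submodule Λ P) := by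
      have hsplit : ∑ α ∈ s₁ ∪ s₂, arr bas h1 α • (v' α + w' α)
          = (∑ α ∈ s₁, arr bas h1 α • v α) + ∑ α ∈ s₂, arr bas h1 α • w α := by
        simp only [smul_add, Finset.sum_add_distrib]
        rw [← hxv, ← hyw]
      rw [hsplit]
      exact hxy
    have key1 : ∀ α ∈ s₁ ∪ s₂, v' α + w' α ∈ (radJ bas ^ (l + 1) • ⊤ : Submodule Λ P) := by
      intro α hα
      rw [mem_RJ_iff bas hmul hmul0 ι hι]
      intro z
      refine core bas hmul hmul0 h1 hlL (s₁ ∪ s₂) (fun β => ι (v' β + w' β) z) ?_ ?_ ?_ α hα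
      · intro β _
        refine (mem_RJ_iff bas hmul hmul0 ι hι l _).1 ?_ z
        exact add_mem (hVle (hv'mem β)) (hWle (hw'mem β))
      · intro β _
        have hfixβ : ee bas β.1 • (v' β + w' β) = v' β + w' β := by
          rw [smul_add, hev' β, hew' β]
        calc ee bas β.1 * ι (v' β + w' β) z
            = ι (ee bas β.1 • (v' β + w' β)) z := by
              rw [map_smul, Finsupp.smul_apply, smul_eq_mul]
          _ = ι (v' β + w' β) z := by rw [hfixβ]
      · have hrw : ι (∑ α ∈ s₁ ∪ s₂, arr bas h1 α • (v' α + w' α)) z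
            = ∑ α ∈ s₁ ∪ s₂, arr bas h1 α * ι (v' α + w' α) z := by
          rw [map_sum, Finset.sum_apply']
          exact Finset.sum_congr rfl fun β _ => by
            rw [map_smul, Finsupp.smul_apply, smul_eq_mul]
        rw [← hrw]
        exact (mem_RJ_iff bas hmul hmul0 ι hι (l + 2) _).1 hsum2 z
    have hzero : ∀ α ∈ s₁ ∪ s₂, v' α = 0 ∧ w' α = 0 := by
      intro α hα
      have h₁ : v' α ∈ W' ⊔ (radJ bas ^ (l + 1) • ⊤ : Submodule Λ P).restrictScalars K :=
        Submodule.mem_sup.2 ⟨-(w' α), neg_mem (hw'mem α), v' α + w' α, key1 α hα, by abel⟩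
      have hv0 : v' α = 0 := (Submodule.disjoint_def.1 hdisj₁) _ (hv'mem α) h₁
      have hw0 : w' α = 0 := (Submodule.disjoint_def.1 hdisj₂) _ (hw'mem α)
        (by have hk := key1 α hα; rw [hv0, zero_add] at hk; exact hk)
      exact ⟨hv0, hw0⟩
    constructor
    · rw [hxv]
      exact Finset.sum_eq_zero fun α hα => by rw [(hzero α hα).1, smul_zero]
    · rw [hyw]
      exact Finset.sum_eq_zero fun α hα => by rw [(hzero α hα).2, smul_zero]

end ModuleSide

end Mul

end Stmt10

open Stmt10

/-- Let $Λ = KQ/⟨\text{paths of length } L+1⟩$ be a truncated path algebra, $P$ a finitely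
generated projective left $Λ$-module and $0 ≤ l ≤ L$.  If $V$, $W$ are $KQ_0$-submodules
of $J^lP$ with $J^lP = V ⊕ W ⊕ J^{l+1}P$, then
$J^{l+1}P = (Q_1·V) ⊕ (Q_1·W) ⊕ J^{l+2}P$. -/
theorem stmt_10 {Vq : Type uV} [Quiver.{uE + 1} Vq] [Fintype Vq] {L : ℕ} (h1 : 1 ≤ L)
    {K Λ : Type*} [Field K] [Ring Λ] [Algebra K Λ]
    (bas : Module.Basis (PathLE Vq L) K Λ)
    (hone : ∑ v : Vq, bas ⟨v, v, Quiver.Path.nil, Nat.zero_le L⟩ = 1)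
    (hmul : ∀ (a b c : Vq) (p : Quiver.Path a b) (q : Quiver.Path b c)
        (hp : p.length ≤ L) (hq : q.length ≤ L),
      bas ⟨b, c, q, hq⟩ * bas ⟨a, b, p, hp⟩ =
        if h : p.length + q.length ≤ L then
          bas ⟨a, c, p.comp q, by rwa [Quiver.Path.length_comp]⟩ else 0)
    (hmul0 : ∀ (a b b' c : Vq) (p : Quiver.Path a b) (q : Quiver.Path b' c)
        (hp : p.length ≤ L) (hq : q.length ≤ L), b ≠ b' →
      bas ⟨b', c, q, hq⟩ * bas ⟨a, b, p, hp⟩ = 0)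
    (P : Type*) [AddCommGroup P] [Module K P] [Module Λ P] [IsScalarTower K Λ P]
    (hP : Module.Projective Λ P) (hfg : Module.Finite Λ P)
    (l : ℕ) (hl : l ≤ L)
    (V' W' : Submodule K P)
    (hV'stab : ∀ (v : Vq), ∀ x ∈ V', bas ⟨v, v, Quiver.Path.nil, Nat.zero_le L⟩ • x ∈ V')
    (hW'stab : ∀ (v : Vq), ∀ x ∈ W', bas ⟨v, v, Quiver.Path.nil, Nat.zero_le L⟩ • x ∈ W')
    (hVle : V' ≤ ((radJ bas ^ l • ⊤ : Submodule Λ P).restrictScalars K))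
    (hWle : W' ≤ ((radJ bas ^ l • ⊤ : Submodule Λ P).restrictScalars K))
    (hsup : V' ⊔ W' ⊔ ((radJ bas ^ (l + 1) • ⊤ : Submodule Λ P).restrictScalars K) =
      ((radJ bas ^ l • ⊤ : Submodule Λ P).restrictScalars K))
    (hdisj₁ : Disjoint V'
      (W' ⊔ ((radJ bas ^ (l + 1) • ⊤ : Submodule Λ P).restrictScalars K)))
    (hdisj₂ : Disjoint W' ((radJ bas ^ (l + 1) • ⊤ : Submodule Λ P).restrictScalars K)) :
    arrowSpan bas h1 (V' : Set P) ⊔ arrowSpan bas h1 (W' : Set P) ⊔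
        ((radJ bas ^ (l + 2) • ⊤ : Submodule Λ P).restrictScalars K) =
      ((radJ bas ^ (l + 1) • ⊤ : Submodule Λ P).restrictScalars K) ∧
    Disjoint (arrowSpan bas h1 (V' : Set P)) (arrowSpan bas h1 (W' : Set P) ⊔
        ((radJ bas ^ (l + 2) • ⊤ : Submodule Λ P).restrictScalars K)) ∧
    Disjoint (arrowSpan bas h1 (W' : Set P))
      ((radJ bas ^ (l + 2) • ⊤ : Submodule Λ P).restrictScalars K) := by
  classical
  obtain ⟨ι, hι⟩ := Module.projective_def.mp hP
  have hmaster := Stmt10.master bas hmul hmul0 h1 ι hι l V' W' hV'stab hW'stab hVle hWle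
    hdisj₁ hdisj₂
  refine ⟨?_, ?_, ?_⟩
  · refine le_antisymm (sup_le (sup_le ?_ ?_) ?_) ?_
    · exact arrowSpan_le_RJ bas hmul h1 V' l (fun u hu => hVle hu)
    · exact arrowSpan_le_RJ bas hmul h1 W' l (fun u hu => hWle hu)
    · intro z hz
      exact Submodule.smul_mono_left (Ideal.pow_le_pow_right (by omega)) hz
    · intro x hx
      have hx' : x ∈ radJ bas • (radJ bas ^ l • ⊤ : Submodule Λ P) := by
        rw [← smul_pow_succ']
        exact hx
      refine Submodule.smul_induction_on hx' ?_ (fun a b ha hb => add_mem ha hb)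
      intro r hr n hn
      have hr1 : r ∈ Sdeg bas 1 := radJ_le_SdegI bas hmul hmul0 hr
      clear hr
      induction hr1 using Submodule.span_induction with
      | mem y hy =>
        obtain ⟨i, him, rfl⟩ := hy
        obtain ⟨a, b, p, hp⟩ := i
        cases p with
        | nil => simp [pdeg] at him
        | @cons cmid _ p' e =>
          have hlen : p'.length + 1 ≤ L := by simpa using hp
          have h1' : e.toPath.length ≤ L := by
            simpa [Quiver.Hom.toPath] using (by omega : 1 ≤ L)
          have h2 : p'.length ≤ L := by omega
          rw [basis_cons_factor bas hmul p' e hp h1' h2, mul_smul]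
          have hm : (bas ⟨a, cmid, ⟨p', h2⟩⟩ : Λ) • n ∈ (radJ bas ^ l • ⊤ : Submodule Λ P) :=
            Submodule.smul_mem _ _ hn
          have hm'' : (bas ⟨a, cmid, ⟨p', h2⟩⟩ : Λ) • n ∈ V' ⊔ W' ⊔
              ((radJ bas ^ (l + 1) • ⊤ : Submodule Λ P).restrictScalars K) := by
            rw [hsup]
            exact hm
          obtain ⟨t, ht, z, hz, hmz⟩ := Submodule.mem_sup.1 hm''
          obtain ⟨v, hv, w, hw, htv⟩ := Submodule.mem_sup.1 ht
          rw [← hmz, ← htv, smul_add, smul_add]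
          refine add_mem (add_mem ?_ ?_) ?_
          · exact Submodule.mem_sup_left (Submodule.mem_sup_left
              (Submodule.subset_span ⟨cmid, b, e, v, hv, rfl⟩))
          · exact Submodule.mem_sup_left (Submodule.mem_sup_right
              (Submodule.subset_span ⟨cmid, b, e, w, hw, rfl⟩))
          · refine Submodule.mem_sup_right ?_
            show (bas ⟨cmid, b, ⟨e.toPath, h1'⟩⟩ : Λ) • z ∈
              ((radJ bas ^ (l + 2) • ⊤ : Submodule Λ P).restrictScalars K)
            simp only [Submodule.restrictScalars_mem]
            rw [smul_pow_succ']
            exact Submodule.smul_mem_smul (arrow_mem_radJ bas hmul e h1') hz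
      | zero => rw [zero_smul]; exact zero_mem _
      | add y₁ y₂ _ _ hy₁ hy₂ => rw [add_smul]; exact add_mem hy₁ hy₂
      | smul cc y _ hy =>
        rw [smul_assoc]
        exact Submodule.smul_mem _ cc hy
  · refine Submodule.disjoint_def.2 fun x hxA hxB => ?_
    obtain ⟨y, hy, z, hz, hxyz⟩ := Submodule.mem_sup.1 hxB
    refine (hmaster x hxA (-y) (neg_mem hy) ?_).1
    have hxz : x + (-y) = z := by rw [← hxyz]; abel
    rw [hxz]
    exact hz
  · refine Submodule.disjoint_def.2 fun x hxA hxB => ?_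
    exact (hmaster 0 (zero_mem _) x hxA (by simpa using hxB)).2
end

section
/- Let $\Lambda = KQ/\langle\text{paths of length } L+1\rangle$ be a truncated path algebra, $P$ a finitely generated projective left $\Lambda$-module, $C \subseteq P$ a $\Lambda$-submodule, and $0 \le l \le L$. Then $JC \cap J^{l+1}P = Q_1 \cdot (C \cap J^l P)$, where $Q_1 \cdot U$ denotes the $K$-span of all $\alpha u$ with $\alpha \in Q_1$ and $u \in U$. -/
universe uV uE

namespace TPA

variable {Vq : Type uV} [Quiver.{uE + 1} Vq] {L : ℕ}
    {K Λ : Type*} [Field K] [Ring Λ] [Algebra K Λ]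
    (bas : Module.Basis (PathLE Vq L) K Λ)

abbrev ArrowT (Vq : Type uV) [Quiver.{uE + 1} Vq] := Σ a b : Vq, a ⟶ b

def len (q : PathLE Vq L) : ℕ := q.2.2.1.length

def aP (h1 : 1 ≤ L) (β : ArrowT Vq) : PathLE Vq L :=
  ⟨β.1, β.2.1, β.2.2.toPath, by simpa [Quiver.Hom.toPath] using h1⟩

/-- span of (classes of) paths of length ≥ m -/
def Dge (m : ℕ) : Submodule K Λ :=
  Submodule.span K {x | ∃ q : PathLE Vq L, m ≤ len q ∧ x = bas q}

/-- span of (classes of) paths of length < m -/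
def Dlt (m : ℕ) : Submodule K Λ :=
  Submodule.span K {x | ∃ q : PathLE Vq L, len q < m ∧ x = bas q}

variable (hmul : ∀ (a b c : Vq) (p : Quiver.Path a b) (q : Quiver.Path b c)
        (hp : p.length ≤ L) (hq : q.length ≤ L),
      bas ⟨b, c, q, hq⟩ * bas ⟨a, b, p, hp⟩ =
        if h : p.length + q.length ≤ L then
          bas ⟨a, c, p.comp q, by rwa [Quiver.Path.length_comp]⟩ else 0)
    (hmul0 : ∀ (a b b' c : Vq) (p : Quiver.Path a b) (q : Quiver.Path b' c)
        (hp : p.length ≤ L) (hq : q.length ≤ L), b ≠ b' →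
      bas ⟨b', c, q, hq⟩ * bas ⟨a, b, p, hp⟩ = 0)

lemma Dge_zero : Dge bas 0 = ⊤ := by
  rw [eq_top_iff, ← bas.span_eq]
  refine Submodule.span_le.2 ?_
  rintro x ⟨q, rfl⟩
  exact Submodule.subset_span ⟨q, Nat.zero_le _, rfl⟩

include hmul hmul0 in
lemma mul_mem_ge {m m' : ℕ} {x y : Λ} (hx : x ∈ Dge bas m) (hy : y ∈ Dge bas m') :
    x * y ∈ Dge bas (m + m') := by
  induction hx using Submodule.span_induction with
  | mem x hxm =>
    obtain ⟨⟨c, d, σ, hσ⟩, hmσ, rfl⟩ := hxm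
    induction hy using Submodule.span_induction with
    | mem y hym =>
      obtain ⟨⟨a, b, τ, hτ⟩, hmτ, rfl⟩ := hym
      simp only [len] at hmσ hmτ
      by_cases hbc : b = c
      · subst hbc
        rw [hmul]
        split
        · exact Submodule.subset_span ⟨⟨a, d, τ.comp σ, by rwa [Quiver.Path.length_comp]⟩,
            by simp only [len, Quiver.Path.length_comp]; omega, rfl⟩
        · exact Submodule.zero_mem _
      · rw [hmul0 _ _ _ _ _ _ _ _ hbc]
        exact Submodule.zero_mem _
    | zero => simpa using Submodule.zero_mem _
    | add y z _ _ hy hz => rw [mul_add]; exact Submodule.add_mem _ hy hz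
    | smul k y _ hy => rw [mul_smul_comm]; exact Submodule.smul_mem _ _ hy
  | zero => simpa using Submodule.zero_mem _
  | add x y _ _ hx hy => rw [add_mul]; exact Submodule.add_mem _ hx hy
  | smul k x _ hx => rw [smul_mul_assoc]; exact Submodule.smul_mem _ _ hx

include hmul hmul0 in
lemma mul_mem_ge' {m : ℕ} (r : Λ) {y : Λ} (hy : y ∈ Dge bas m) : r * y ∈ Dge bas m := by
  have : r ∈ Dge bas 0 := by rw [Dge_zero]; trivial
  simpa using mul_mem_ge bas hmul hmul0 this hy

lemma exists_first {a b : Vq} (p : Quiver.Path a b) (hp : 0 < p.length) :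
    ∃ (c : Vq) (α : a ⟶ c) (r : Quiver.Path c b),
      p = α.toPath.comp r ∧ r.length + 1 = p.length := by
  induction p with
  | nil => simp at hp
  | cons τ β ih =>
    rcases Nat.eq_zero_or_pos τ.length with h0 | hpos
    · cases τ with
      | nil => exact ⟨_, β, Quiver.Path.nil, rfl, rfl⟩
      | cons _ _ => simp at h0
    · obtain ⟨c, α, r, rfl, hlen⟩ := ih hpos
      refine ⟨c, α, r.cons β, rfl, ?_⟩
      simp only [Quiver.Path.length_cons]
      omega

include hmul in
lemma bas_cons (h1 : 1 ≤ L) {a c b : Vq} (τ : Quiver.Path a c) (α : c ⟶ b)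
    (h : (τ.cons α).length ≤ L) (hτ : τ.length ≤ L) :
    bas ⟨a, b, τ.cons α, h⟩ =
      bas ⟨c, b, α.toPath, by simpa [Quiver.Hom.toPath] using h1⟩ * bas ⟨a, c, τ, hτ⟩ := by
  rw [hmul a c b τ α.toPath hτ (by simpa [Quiver.Hom.toPath] using h1),
    dif_pos (by simpa [Quiver.Hom.toPath] using h)]
  rfl

include hmul hmul0 in
lemma mem_Dge_one_of_mem_radJ {x : Λ} (hx : x ∈ radJ bas) : x ∈ Dge bas 1 := by
  induction hx using Submodule.span_induction with
  | mem x hxm =>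
    obtain ⟨a, b, p, hp, hpos, rfl⟩ := hxm
    exact Submodule.subset_span ⟨⟨a, b, p, hp⟩, by simp only [len]; exact hpos, rfl⟩
  | zero => exact Submodule.zero_mem _
  | add x y _ _ hx hy => exact Submodule.add_mem _ hx hy
  | smul r x _ hx => rw [smul_eq_mul]; exact mul_mem_ge' bas hmul hmul0 r hx

include hmul in
lemma bas_mem_pow (h1 : 1 ≤ L) : ∀ (m : ℕ) (q : PathLE Vq L), m ≤ len q →
    bas q ∈ radJ bas ^ m := by
  intro m
  induction m with
  | zero => intro q _; rw [Submodule.pow_zero, Ideal.one_eq_top]; trivial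
  | succ m ih =>
    rintro ⟨a, b, σ, h⟩ hm
    simp only [len] at hm
    obtain ⟨c, α, r, rfl, hlen⟩ := exists_first σ (by omega)
    have hr : r.length ≤ L := by omega
    have hα : (α.toPath).length ≤ L := by simpa [Quiver.Hom.toPath] using h1
    have e1 : bas ⟨a, b, α.toPath.comp r, h⟩ = bas ⟨c, b, r, hr⟩ * bas ⟨a, c, α.toPath, hα⟩ := by
      rw [hmul a c b α.toPath r hα hr, dif_pos (by rwa [← Quiver.Path.length_comp])]
    rw [e1, Submodule.pow_succ]
    refine Ideal.mul_mem_mul (ih ⟨c, b, r, hr⟩ ?_) (Ideal.subset_span ?_)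
    · simp only [len]; omega
    · exact ⟨a, c, α.toPath, hα, by simp [Quiver.Hom.toPath], rfl⟩

include hmul hmul0 in
lemma mem_Dge_of_mem_pow {m : ℕ} {x : Λ} (hx : x ∈ radJ bas ^ m) : x ∈ Dge bas m := by
  induction m generalizing x with
  | zero => rw [Dge_zero]; trivial
  | succ m ih =>
    rw [Submodule.pow_succ] at hx
    refine Submodule.mul_induction_on hx (fun r hr s hs => ?_)
      (fun u v hu hv => Submodule.add_mem _ hu hv)
    exact mul_mem_ge bas hmul hmul0 (ih hr) (mem_Dge_one_of_mem_radJ bas hmul hmul0 hs)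

include hmul hmul0 in
lemma mem_pow_iff (h1 : 1 ≤ L) {m : ℕ} {x : Λ} :
    x ∈ radJ bas ^ m ↔ x ∈ Dge bas m := by
  refine ⟨mem_Dge_of_mem_pow bas hmul hmul0, fun hx => ?_⟩
  induction hx using Submodule.span_induction with
  | mem x hxm => obtain ⟨q, hq, rfl⟩ := hxm; exact bas_mem_pow bas hmul h1 m q hq
  | zero => exact Submodule.zero_mem _
  | add x y _ _ hx hy => exact Submodule.add_mem _ hx hy
  | smul r x _ hx => exact Submodule.smul_of_tower_mem _ r hx

section Modules
variable {M : Type*} [AddCommGroup M] [Module K M] [Module Λ M] [IsScalarTower K Λ M]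

lemma pow_smul_succ (I : Ideal Λ) (m : ℕ) (N : Submodule Λ M) :
    I ^ (m + 1) • N = I • (I ^ m • N) := by
  induction m generalizing N with
  | zero => rw [Submodule.pow_one, Submodule.pow_zero, Ideal.one_eq_top, Submodule.top_smul]
  | succ m ih =>
    calc I ^ (m + 1 + 1) • N = (I ^ (m + 1) • I) • N := by
          rw [Submodule.pow_succ, Ideal.smul_eq_mul]
      _ = I ^ (m + 1) • (I • N) := Submodule.smul_assoc _ _ _
      _ = I • (I ^ m • (I • N)) := ih _
      _ = I • ((I ^ m • I) • N) := by rw [Submodule.smul_assoc]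
      _ = I • (I ^ (m + 1) • N) := by rw [Ideal.smul_eq_mul, ← Submodule.pow_succ]

include hmul hmul0 in
lemma radJ_smul_coe (h1 : 1 ≤ L) (N : Submodule Λ M) :
    ((radJ bas • N : Submodule Λ M) : Set M) = (arrowSpan bas h1 (N : Set M) : Set M) := by
  apply Set.Subset.antisymm
  · intro x hx
    refine Submodule.smul_induction_on hx (fun r hr n hn => ?_)
      (fun a b ha hb => Submodule.add_mem _ ha hb)
    have hr1 : r ∈ Dge bas 1 := mem_Dge_one_of_mem_radJ bas hmul hmul0 hr
    clear hr
    induction hr1 using Submodule.span_induction with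
    | mem y hy =>
      obtain ⟨⟨a, b, σ, hσL⟩, hlen1, rfl⟩ := hy
      simp only [len] at hlen1
      match σ, hσL, hlen1 with
      | Quiver.Path.cons (b := c) τ α, hσL, _ =>
        have hτ : τ.length ≤ L := by rw [Quiver.Path.length_cons] at hσL; omega
        rw [bas_cons bas hmul h1 τ α hσL hτ, mul_smul]
        exact Submodule.subset_span ⟨c, b, α, _, N.smul_mem _ hn, rfl⟩
    | zero => rw [zero_smul]; exact Submodule.zero_mem _
    | add y z _ _ hy hz => rw [add_smul]; exact Submodule.add_mem _ hy hz
    | smul k y _ hy => rw [smul_assoc]; exact Submodule.smul_mem _ _ hy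
  · intro x hx
    have hle : arrowSpan bas h1 (N : Set M) ≤
        Submodule.restrictScalars K (radJ bas • N) := by
      refine Submodule.span_le.2 ?_
      rintro y ⟨a, b, α, u, hu, rfl⟩
      have hαJ : bas ⟨a, b, α.toPath, by simpa [Quiver.Hom.toPath] using h1⟩ ∈ radJ bas :=
        Ideal.subset_span ⟨a, b, α.toPath, by simpa [Quiver.Hom.toPath] using h1,
          by simp [Quiver.Hom.toPath], rfl⟩
      rw [SetLike.mem_coe, Submodule.restrictScalars_mem]
      exact Submodule.smul_mem_smul hαJ hu
    exact hle hx

include hmul hmul0 in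
lemma easy_incl (h1 : 1 ≤ L) (C : Submodule Λ M) (l : ℕ) :
    (arrowSpan bas h1 ((C ⊓ radJ bas ^ l • ⊤ : Submodule Λ M) : Set M) : Set M) ⊆
      ((radJ bas • C ⊓ radJ bas ^ (l + 1) • ⊤ : Submodule Λ M) : Set M) := by
  intro x hx
  have hle : arrowSpan bas h1 ((C ⊓ radJ bas ^ l • ⊤ : Submodule Λ M) : Set M) ≤
      Submodule.restrictScalars K (radJ bas • C ⊓ radJ bas ^ (l + 1) • ⊤) := by
    refine Submodule.span_le.2 ?_
    rintro y ⟨a, b, α, u, hu, rfl⟩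
    have hαJ : bas ⟨a, b, α.toPath, by simpa [Quiver.Hom.toPath] using h1⟩ ∈ radJ bas :=
      Ideal.subset_span ⟨a, b, α.toPath, by simpa [Quiver.Hom.toPath] using h1,
        by simp [Quiver.Hom.toPath], rfl⟩
    have hu' : u ∈ C ⊓ radJ bas ^ l • ⊤ := hu
    have h2 : (bas ⟨a, b, α.toPath, by simpa [Quiver.Hom.toPath] using h1⟩) • u ∈
        radJ bas ^ (l + 1) • (⊤ : Submodule Λ M) := by
      rw [pow_smul_succ]; exact Submodule.smul_mem_smul hαJ hu'.2
    exact ⟨Submodule.smul_mem_smul hαJ hu'.1, h2⟩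
  exact hle hx

end Modules
section Projections

noncomputable def pge (m : ℕ) : Λ →ₗ[K] Λ :=
  Module.Basis.constr bas K (fun q => if m ≤ len q then bas q else 0)

noncomputable def plt (m : ℕ) : Λ →ₗ[K] Λ :=
  Module.Basis.constr bas K (fun q => if len q < m then bas q else 0)

lemma pge_add_plt (m : ℕ) (x : Λ) : pge bas m x + plt bas m x = x := by
  have h : (pge (K := K) bas m + plt bas m : Λ →ₗ[K] Λ) = LinearMap.id := by
    refine bas.ext fun q => ?_
    rw [LinearMap.add_apply, LinearMap.id_apply, pge, plt, Module.Basis.constr_basis,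
      Module.Basis.constr_basis]
    by_cases hq : m ≤ len q
    · rw [if_pos hq, if_neg (by omega), add_zero]
    · rw [if_neg hq, if_pos (by omega), zero_add]
  have := LinearMap.ext_iff.1 h x
  simpa using this

lemma mem_top_span (x : Λ) : x ∈ Submodule.span K (Set.range bas) := by
  rw [bas.span_eq]; trivial

lemma pge_mem (m : ℕ) (x : Λ) : pge bas m x ∈ Dge bas m := by
  induction mem_top_span bas x using Submodule.span_induction with
  | mem y hy =>
    obtain ⟨q, rfl⟩ := hy
    rw [pge, Module.Basis.constr_basis]
    split
    · exact Submodule.subset_span ⟨q, ‹_›, rfl⟩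
    · exact Submodule.zero_mem _
  | zero => rw [map_zero]; exact Submodule.zero_mem _
  | add y z _ _ hy hz => rw [map_add]; exact Submodule.add_mem _ hy hz
  | smul k y _ hy => rw [map_smul]; exact Submodule.smul_mem _ _ hy

lemma plt_mem (m : ℕ) (x : Λ) : plt bas m x ∈ Dlt bas m := by
  induction mem_top_span bas x using Submodule.span_induction with
  | mem y hy =>
    obtain ⟨q, rfl⟩ := hy
    rw [plt, Module.Basis.constr_basis]
    split
    · exact Submodule.subset_span ⟨q, ‹_›, rfl⟩
    · exact Submodule.zero_mem _
  | zero => rw [map_zero]; exact Submodule.zero_mem _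
  | add y z _ _ hy hz => rw [map_add]; exact Submodule.add_mem _ hy hz
  | smul k y _ hy => rw [map_smul]; exact Submodule.smul_mem _ _ hy

lemma pge_eq_self_of_mem {m : ℕ} {x : Λ} (hx : x ∈ Dge bas m) : pge bas m x = x := by
  induction hx using Submodule.span_induction with
  | mem y hy =>
    obtain ⟨q, hq, rfl⟩ := hy
    rw [pge, Module.Basis.constr_basis, if_pos hq]
  | zero => rw [map_zero]
  | add y z _ _ hy hz => rw [map_add, hy, hz]
  | smul k y _ hy => rw [map_smul, hy]

lemma pge_eq_zero_of_mem_lt {m : ℕ} {x : Λ} (hx : x ∈ Dlt bas m) : pge bas m x = 0 := by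
  induction hx using Submodule.span_induction with
  | mem y hy =>
    obtain ⟨q, hq, rfl⟩ := hy
    rw [pge, Module.Basis.constr_basis, if_neg (by omega)]
  | zero => rw [map_zero]
  | add y z _ _ hy hz => rw [map_add, hy, hz, add_zero]
  | smul k y _ hy => rw [map_smul, hy, smul_zero]

lemma eq_zero_of_mem_ge_lt {m : ℕ} {x : Λ} (h1x : x ∈ Dge bas m) (h2x : x ∈ Dlt bas m) :
    x = 0 := by
  rw [← pge_eq_self_of_mem bas h1x, pge_eq_zero_of_mem_lt bas h2x]

lemma Dlt_mono {m m' : ℕ} (h : m ≤ m') : Dlt bas m ≤ Dlt (K := K) bas m' := by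
  refine Submodule.span_mono ?_
  rintro x ⟨q, hq, rfl⟩
  exact ⟨q, by omega, rfl⟩

end Projections

section Idem

noncomputable def eV (a : Vq) : Λ := bas ⟨a, a, Quiver.Path.nil, Nat.zero_le L⟩

include hmul in
lemma e_mul_bas_eq {c a : Vq} (σ : Quiver.Path c a) (hσ : σ.length ≤ L) :
    eV bas a * bas ⟨c, a, σ, hσ⟩ = bas ⟨c, a, σ, hσ⟩ := by
  rw [eV, hmul c a a σ Quiver.Path.nil hσ (Nat.zero_le L), dif_pos (by simpa using hσ)]
  rfl

include hmul0 in
lemma e_mul_bas_ne {c b a : Vq} (σ : Quiver.Path c b) (hσ : σ.length ≤ L) (h : b ≠ a) :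
    eV bas a * bas ⟨c, b, σ, hσ⟩ = 0 :=
  hmul0 c b a a σ Quiver.Path.nil hσ (Nat.zero_le L) h

/-- paths with target `a` and length `< L` -/
def EtLt (a : Vq) : Submodule K Λ :=
  Submodule.span K {x | ∃ (c : Vq) (σ : Quiver.Path c a) (h : σ.length ≤ L),
    σ.length < L ∧ x = bas ⟨c, a, σ, h⟩}

include hmul hmul0 in
lemma e_mul_mem_EtLt (a : Vq) {x : Λ} (hx : x ∈ Dlt bas L) : eV bas a * x ∈ EtLt bas a := by
  induction hx using Submodule.span_induction with
  | mem y hy =>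
    obtain ⟨⟨c, b, σ, hσ⟩, hlt, rfl⟩ := hy
    simp only [len] at hlt
    by_cases hba : b = a
    · subst hba
      rw [e_mul_bas_eq bas hmul σ hσ]
      exact Submodule.subset_span ⟨c, σ, hσ, hlt, rfl⟩
    · rw [e_mul_bas_ne bas hmul0 σ hσ hba]
      exact Submodule.zero_mem _
  | zero => rw [mul_zero]; exact Submodule.zero_mem _
  | add y z _ _ hy hz => rw [mul_add]; exact Submodule.add_mem _ hy hz
  | smul k y _ hy => rw [mul_smul_comm]; exact Submodule.smul_mem _ _ hy

include hmul hmul0 in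
lemma mem_EtLt {a : Vq} {x : Λ} (hex : eV bas a * x = x) (hx : x ∈ Dlt bas L) :
    x ∈ EtLt bas a := hex ▸ e_mul_mem_EtLt bas hmul hmul0 a hx

include hmul hmul0 in
lemma e_plt_comm (a : Vq) (m : ℕ) (x : Λ) :
    eV bas a * plt bas m x = plt bas m (eV bas a * x) := by
  have h : (LinearMap.mulLeft K (eV bas a)).comp (plt bas m) =
      (plt (K := K) bas m).comp (LinearMap.mulLeft K (eV bas a)) := by
    refine bas.ext fun q => ?_
    obtain ⟨c, b, σ, hσ⟩ := q
    simp only [LinearMap.comp_apply, LinearMap.mulLeft_apply, plt, Module.Basis.constr_basis]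
    by_cases hba : b = a
    · subst hba
      rw [e_mul_bas_eq bas hmul σ hσ, Module.Basis.constr_basis]
      split
      · rw [e_mul_bas_eq bas hmul σ hσ]
      · rw [mul_zero]
    · rw [e_mul_bas_ne bas hmul0 σ hσ hba, map_zero]
      split
      · rw [e_mul_bas_ne bas hmul0 σ hσ hba]
      · rw [mul_zero]
  exact LinearMap.ext_iff.1 h x

end Idem
section Retraction

open Classical in
/-- On a basis path, strip the last arrow if it equals `β₀`, else `0`. -/
noncomputable def TrFun (β₀ : ArrowT Vq) : PathLE Vq L → Λ := fun q =>
  match q with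
  | ⟨_, _, ⟨Quiver.Path.nil, _⟩⟩ => 0
  | ⟨a, b, ⟨Quiver.Path.cons (b := c) τ α, h⟩⟩ =>
    if (⟨c, b, α⟩ : ArrowT Vq) = β₀ then
      bas ⟨a, c, τ, by rw [Quiver.Path.length_cons] at h; omega⟩ else 0

noncomputable def Tr (β₀ : ArrowT Vq) : Λ →ₗ[K] Λ := Module.Basis.constr bas K (TrFun bas β₀)

include hmul in
open Classical in
lemma Tr_mul (h1 : 1 ≤ L) (β₀ β : ArrowT Vq) {c : Vq} (σ : Quiver.Path c β.1)
    (hσ : σ.length ≤ L) (hlt : σ.length < L) :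
    Tr bas β₀ (bas (aP h1 β) * bas ⟨c, β.1, σ, hσ⟩) =
      if β = β₀ then bas ⟨c, β.1, σ, hσ⟩ else 0 := by
  obtain ⟨a, b, α⟩ := β
  have e1 : bas (aP h1 ⟨a, b, α⟩) * bas ⟨c, a, σ, hσ⟩ =
      bas ⟨c, b, σ.cons α, by rw [Quiver.Path.length_cons]; omega⟩ := by
    rw [show bas (aP h1 ⟨a, b, α⟩) =
          bas ⟨a, b, α.toPath, by simpa [Quiver.Hom.toPath] using h1⟩ from rfl,
      hmul c a b σ α.toPath hσ (by simpa [Quiver.Hom.toPath] using h1),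
      dif_pos (by simp only [Quiver.Hom.toPath, Quiver.Path.length_cons,
        Quiver.Path.length_nil]; omega)]
    rfl
  rw [e1, Tr, Module.Basis.constr_basis]
  rfl

include hmul in
lemma Tr_mul_self (h1 : 1 ≤ L) (β₀ : ArrowT Vq) {x : Λ} (hx : x ∈ EtLt bas β₀.1) :
    Tr bas β₀ (bas (aP h1 β₀) * x) = x := by
  induction hx using Submodule.span_induction with
  | mem y hy =>
    obtain ⟨c, σ, hσ, hlt, rfl⟩ := hy
    rw [Tr_mul bas hmul h1 β₀ β₀ σ hσ hlt, if_pos rfl]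
  | zero => rw [mul_zero, map_zero]
  | add y z _ _ hy hz => rw [mul_add, map_add, hy, hz]
  | smul k y _ hy => rw [mul_smul_comm, map_smul, hy]

include hmul in
lemma Tr_mul_other (h1 : 1 ≤ L) {β₀ β : ArrowT Vq} (hne : β ≠ β₀) {x : Λ}
    (hx : x ∈ EtLt bas β.1) : Tr bas β₀ (bas (aP h1 β) * x) = 0 := by
  induction hx using Submodule.span_induction with
  | mem y hy =>
    obtain ⟨c, σ, hσ, hlt, rfl⟩ := hy
    rw [Tr_mul bas hmul h1 β₀ β σ hσ hlt, if_neg hne]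
  | zero => rw [mul_zero, map_zero]
  | add y z _ _ hy hz => rw [mul_add, map_add, hy, hz, add_zero]
  | smul k y _ hy => rw [mul_smul_comm, map_smul, hy, smul_zero]

include hmul hmul0 in
lemma inj_arrows (h1 : 1 ≤ L) (A : Finset (ArrowT Vq)) (v : ArrowT Vq → Λ)
    (hv : ∀ β ∈ A, eV bas β.1 * v β = v β)
    (hvL : ∀ β ∈ A, v β ∈ Dlt bas L)
    (hsum : ∑ β ∈ A, bas (aP h1 β) * v β = 0) :
    ∀ β₀ ∈ A, v β₀ = 0 := by
  intro β₀ hβ₀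
  have hmem : ∀ β ∈ A, v β ∈ EtLt bas β.1 := fun β hβ =>
    mem_EtLt bas hmul hmul0 (hv β hβ) (hvL β hβ)
  have h0 := congrArg (Tr bas β₀) hsum
  rw [map_sum, map_zero] at h0
  rw [Finset.sum_eq_single_of_mem β₀ hβ₀ (fun β hβ hne =>
    Tr_mul_other bas hmul h1 hne (hmem β hβ)),
    Tr_mul_self bas hmul h1 β₀ (hmem β₀ hβ₀)] at h0
  exact h0

end Retraction
section Free

lemma ksmul_comm {M : Type*} [AddCommGroup M] [Module K M] [Module Λ M]
    [IsScalarTower K Λ M] (k : K) (r : Λ) (v : M) : k • (r • v) = r • (k • v) := by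
  rw [← smul_assoc, Algebra.smul_def, Algebra.commutes, mul_smul, algebraMap_smul]

include hmul in
lemma bas_aP_mul_e (h1 : 1 ≤ L) (β : ArrowT Vq) :
    bas (aP h1 β) * eV bas β.1 = bas (aP h1 β) := by
  rw [show bas (aP h1 β) =
        bas ⟨β.1, β.2.1, β.2.2.toPath, by simpa [Quiver.Hom.toPath] using h1⟩ from rfl, eV,
    hmul β.1 β.1 β.2.1 Quiver.Path.nil β.2.2.toPath (Nat.zero_le L)
      (by simpa [Quiver.Hom.toPath] using h1),
    dif_pos (by simpa [Quiver.Hom.toPath] using h1)]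
  rfl

include hmul in
lemma e_idem (a : Vq) : eV bas a * eV bas a = eV bas a := by
  rw [eV, hmul a a a Quiver.Path.nil Quiver.Path.nil (Nat.zero_le L) (Nat.zero_le L),
    dif_pos (by simpa using Nat.zero_le L)]
  rfl

include hmul hmul0 in
lemma arrow_mul_lt (h1 : 1 ≤ L) (β : ArrowT Vq) {m : ℕ} {y : Λ} (hy : y ∈ Dlt bas m) :
    bas (aP h1 β) * y ∈ Dlt bas (m + 1) := by
  induction hy using Submodule.span_induction with
  | mem y hy =>
    obtain ⟨⟨c, b, σ, hσ⟩, hlt, rfl⟩ := hy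
    simp only [len] at hlt
    by_cases hb : b = β.1
    · subst hb
      rw [show bas (aP h1 β) =
            bas ⟨β.1, β.2.1, β.2.2.toPath, by simpa [Quiver.Hom.toPath] using h1⟩ from rfl,
        hmul c β.1 β.2.1 σ β.2.2.toPath hσ (by simpa [Quiver.Hom.toPath] using h1)]
      split
      · refine Submodule.subset_span ⟨⟨c, β.2.1, σ.comp β.2.2.toPath, by assumption⟩, ?_, rfl⟩
      
        simp only [len, Quiver.Path.length_comp, Quiver.Hom.toPath, Quiver.Path.length_cons,
          Quiver.Path.length_nil]
        omega
      · exact Submodule.zero_mem _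
    · rw [show bas (aP h1 β) =
            bas ⟨β.1, β.2.1, β.2.2.toPath, by simpa [Quiver.Hom.toPath] using h1⟩ from rfl,
        hmul0 c b β.1 β.2.1 σ β.2.2.toPath hσ (by simpa [Quiver.Hom.toPath] using h1)
          (fun h => hb h)]
      exact Submodule.zero_mem _
  | zero => rw [mul_zero]; exact Submodule.zero_mem _
  | add y z _ _ hy hz => rw [mul_add]; exact Submodule.add_mem _ hy hz
  | smul k y _ hy => rw [mul_smul_comm]; exact Submodule.smul_mem _ _ hy

include hmul hmul0 in
lemma arrow_mul_ge (h1 : 1 ≤ L) (β : ArrowT Vq) {m : ℕ} {y : Λ} (hy : y ∈ Dge bas m) :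
    bas (aP h1 β) * y ∈ Dge bas (m + 1) := by
  have h := mul_mem_ge bas hmul hmul0 (m := 1) (m' := m)
    (Submodule.subset_span ⟨aP h1 β, by simp [len, aP, Quiver.Hom.toPath], rfl⟩) hy
  rwa [Nat.add_comm] at h

variable {ι : Type*} [Fintype ι]

include hmul hmul0 in
lemma mem_pow_smul_top_iff (h1 : 1 ≤ L) {m : ℕ} {x : ι → Λ} :
    x ∈ (radJ bas ^ m • ⊤ : Submodule Λ (ι → Λ)) ↔ ∀ j, x j ∈ Dge bas m := by
  classical
  constructor
  · intro hx
    refine Submodule.smul_induction_on hx (fun r hr n _ => ?_) (fun a b ha hb j => ?_)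
    · intro j
      have h0 : (n j : Λ) ∈ Dge bas 0 := by rw [Dge_zero]; trivial
      have := mul_mem_ge bas hmul hmul0 (mem_Dge_of_mem_pow bas hmul hmul0 hr) h0
      simpa using this
    · simpa using Submodule.add_mem _ (ha j) (hb j)
  · intro hx
    rw [← Finset.univ_sum_single x]
    refine Submodule.sum_mem _ fun j _ => ?_
    have h1j : (x j : Λ) ∈ radJ bas ^ m := (mem_pow_iff bas hmul hmul0 h1).2 (hx j)
    have heq : Pi.single j (x j) = (x j) • (Pi.single j (1 : Λ) : ι → Λ) := by
      funext i
      by_cases hij : i = j <;>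
        simp [Pi.single_apply, hij]
    rw [heq]
    exact Submodule.smul_mem_smul h1j trivial

end Free
section FreeCase
variable {ι : Type*} [Fintype ι]

include hmul hmul0 in
lemma free_case (h1 : 1 ≤ L) (C : Submodule Λ (ι → Λ)) (l : ℕ) (hl : l ≤ L) :
    ((radJ bas • C ⊓ radJ bas ^ (l + 1) • ⊤ : Submodule Λ (ι → Λ)) : Set (ι → Λ)) =
      (arrowSpan bas h1 ((C ⊓ radJ bas ^ l • ⊤ : Submodule Λ (ι → Λ)) : Set (ι → Λ)) :
        Set (ι → Λ)) := by
  classical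
  apply Set.Subset.antisymm ?hard (easy_incl bas hmul hmul0 h1 C l)
  intro x hx
  have hx' : x ∈ (radJ bas • C ⊓ radJ bas ^ (l + 1) • ⊤ : Submodule Λ (ι → Λ)) := hx
  obtain ⟨hx1, hx2⟩ := Submodule.mem_inf.1 hx'
  -- representation of x as a combination of arrow multiples of elements of C
  have hx1' : x ∈ arrowSpan bas h1 (C : Set (ι → Λ)) := by
    have hset : x ∈ (↑(radJ bas • C) : Set (ι → Λ)) := hx1
    rw [radJ_smul_coe bas hmul hmul0 h1 C] at hset
    exact hset
  obtain ⟨n, f, g, hsum⟩ := Submodule.mem_span_set'.1 hx1'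
  choose aa bb αα uu huC heq using fun i => (g i).2
  set β : Fin n → ArrowT Vq := fun i => ⟨aa i, bb i, αα i⟩ with hβ
  set cc : Fin n → (ι → Λ) := fun i => f i • uu i with hcc
  have hccC : ∀ i, cc i ∈ C := fun i => C.smul_of_tower_mem _ (huC i)
  have hxrep : x = ∑ i, bas (aP h1 (β i)) • cc i := by
    rw [← hsum]
    refine Finset.sum_congr rfl fun i _ => ?_
    rw [heq i, hcc, ksmul_comm]
    rfl
  set A : Finset (ArrowT Vq) := Finset.image β Finset.univ with hA
  set g2 : ArrowT Vq → (ι → Λ) :=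
    fun γ => ∑ i ∈ Finset.univ.filter (fun i => β i = γ), eV bas γ.1 • cc i with hg2
  have hg2C : ∀ γ, g2 γ ∈ C := fun γ =>
    Submodule.sum_mem _ fun i _ => C.smul_mem _ (hccC i)
  have hrep2 : ∑ γ ∈ A, bas (aP h1 γ) • g2 γ = x := by
    rw [hxrep, ← Finset.sum_fiberwise_of_maps_to
      (fun i _ => Finset.mem_image_of_mem β (Finset.mem_univ i))
      (fun i => bas (aP h1 (β i)) • cc i)]
    refine Finset.sum_congr rfl fun γ hγ => ?_
    rw [hg2, Finset.smul_sum]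
    refine Finset.sum_congr rfl fun i hi => ?_
    have hiγ : β i = γ := by simpa using (Finset.mem_filter.1 hi).2
    subst hiγ
    rw [← mul_smul, bas_aP_mul_e bas hmul h1]
  have he_g2 : ∀ γ, eV bas γ.1 • g2 γ = g2 γ := by
    intro γ
    rw [hg2, Finset.smul_sum]
    refine Finset.sum_congr rfl fun i hi => ?_
    rw [← mul_smul, e_idem bas hmul]
  -- the low-degree parts
  set w : ArrowT Vq → ι → Λ := fun γ j => plt bas l (g2 γ j) with hw
  have key : ∀ j, ∑ γ ∈ A, bas (aP h1 γ) * w γ j = 0 := by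
    intro j
    have hxj : x j ∈ Dge bas (l + 1) :=
      (mem_pow_smul_top_iff bas hmul hmul0 h1).1 hx2 j
    have hsplit : ∑ γ ∈ A, bas (aP h1 γ) * w γ j =
        x j - ∑ γ ∈ A, bas (aP h1 γ) * pge bas l (g2 γ j) := by
      rw [eq_sub_iff_add_eq, ← Finset.sum_add_distrib, ← hrep2, Finset.sum_apply]
      refine Finset.sum_congr rfl fun γ _ => ?_
      rw [Pi.smul_apply, smul_eq_mul, hw, ← mul_add, add_comm, pge_add_plt]
    have hrhs : x j - ∑ γ ∈ A, bas (aP h1 γ) * pge bas l (g2 γ j) ∈ Dge bas (l + 1) :=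
      Submodule.sub_mem _ hxj (Submodule.sum_mem _ fun γ _ =>
        arrow_mul_ge bas hmul hmul0 h1 γ (pge_mem bas l _))
    have hlhs : ∑ γ ∈ A, bas (aP h1 γ) * w γ j ∈ Dlt bas (l + 1) :=
      Submodule.sum_mem _ fun γ _ =>
        arrow_mul_lt bas hmul hmul0 h1 γ (plt_mem bas l _)
    exact eq_zero_of_mem_ge_lt bas (hsplit ▸ hrhs) hlhs
  have hw0 : ∀ γ ∈ A, w γ = 0 := by
    intro γ hγ
    funext j
    refine inj_arrows bas hmul hmul0 h1 A (fun γ => w γ j) (fun γ' hγ' => ?_)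
      (fun γ' _ => Dlt_mono bas hl (plt_mem bas l _)) (key j) γ hγ
    rw [hw, e_plt_comm bas hmul hmul0]
    congr 1
    calc eV bas γ'.1 * g2 γ' j = (eV bas γ'.1 • g2 γ') j := rfl
      _ = g2 γ' j := by rw [he_g2]
  have hJl : ∀ γ ∈ A, g2 γ ∈ (radJ bas ^ l • ⊤ : Submodule Λ (ι → Λ)) := by
    intro γ hγ
    refine (mem_pow_smul_top_iff bas hmul hmul0 h1).2 fun j => ?_
    have h0 : pge bas l (g2 γ j) + plt bas l (g2 γ j) = g2 γ j := pge_add_plt bas l _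
    have hwj : plt bas l (g2 γ j) = 0 := by
      have := congrFun (hw0 γ hγ) j
      simpa [hw] using this
    rw [← h0, hwj, add_zero]
    exact pge_mem bas l _
  rw [← hrep2]
  refine Submodule.sum_mem _ fun γ hγ => ?_
  exact Submodule.subset_span ⟨γ.1, γ.2.1, γ.2.2, g2 γ,
    Submodule.mem_inf.2 ⟨hg2C γ, hJl γ hγ⟩, rfl⟩

end FreeCase
section Transfer

lemma arrowSpan_map (h1 : 1 ≤ L) {M M' : Type*} [AddCommGroup M] [Module K M] [Module Λ M]
    [IsScalarTower K Λ M] [AddCommGroup M'] [Module K M'] [Module Λ M']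
    [IsScalarTower K Λ M'] (f : M →ₗ[Λ] M') {U : Set M} {U' : Set M'}
    (hU : ∀ u ∈ U, f u ∈ U') {x : M} (hx : x ∈ arrowSpan bas h1 U) :
    f x ∈ arrowSpan bas h1 U' := by
  have hle : arrowSpan bas h1 U ≤ (arrowSpan bas h1 U').comap (f.restrictScalars K) := by
    refine Submodule.span_le.2 ?_
    rintro y ⟨a, b, α, u, hu, rfl⟩
    refine Submodule.mem_comap.2 ?_
    rw [LinearMap.restrictScalars_apply, LinearMap.map_smul]
    exact Submodule.subset_span ⟨a, b, α, f u, hU u hu, rfl⟩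
  exact hle hx

end Transfer
end TPA

/-- Let $Λ = KQ/⟨\text{paths of length } L+1⟩$ be a truncated path algebra, $P$ a finitely
generated projective left $Λ$-module, $C ⊆ P$ a $Λ$-submodule, and $0 ≤ l ≤ L$.  Then
$JC ∩ J^{l+1}P = Q_1 · (C ∩ J^lP)$. -/
theorem stmt_11 {Vq : Type uV} [Quiver.{uE + 1} Vq] [Fintype Vq] {L : ℕ} (h1 : 1 ≤ L)
    {K Λ : Type*} [Field K] [Ring Λ] [Algebra K Λ]
    (bas : Module.Basis (PathLE Vq L) K Λ)
    (hone : ∑ v : Vq, bas ⟨v, v, Quiver.Path.nil, Nat.zero_le L⟩ = 1)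
    (hmul : ∀ (a b c : Vq) (p : Quiver.Path a b) (q : Quiver.Path b c)
        (hp : p.length ≤ L) (hq : q.length ≤ L),
      bas ⟨b, c, q, hq⟩ * bas ⟨a, b, p, hp⟩ =
        if h : p.length + q.length ≤ L then
          bas ⟨a, c, p.comp q, by rwa [Quiver.Path.length_comp]⟩ else 0)
    (hmul0 : ∀ (a b b' c : Vq) (p : Quiver.Path a b) (q : Quiver.Path b' c)
        (hp : p.length ≤ L) (hq : q.length ≤ L), b ≠ b' →
      bas ⟨b', c, q, hq⟩ * bas ⟨a, b, p, hp⟩ = 0)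
    (P : Type*) [AddCommGroup P] [Module K P] [Module Λ P] [IsScalarTower K Λ P]
    (hP : Module.Projective Λ P) (hfg : Module.Finite Λ P)
    (C : Submodule Λ P) (l : ℕ) (hl : l ≤ L) :
    ((radJ bas • C ⊓ radJ bas ^ (l + 1) • ⊤ : Submodule Λ P) : Set P) =
      (arrowSpan bas h1
        ((C ⊓ radJ bas ^ l • ⊤ : Submodule Λ P) : Set P) : Set P) := by
  classical
  obtain ⟨n, π, hπ⟩ := Module.Finite.exists_fin' Λ P
  obtain ⟨s, hs⟩ := Module.projective_lifting_property π LinearMap.id hπ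
  have hsx : ∀ x : P, π (s x) = x := fun x => by
    have := LinearMap.ext_iff.1 hs x
    simpa using this
  set C' : Submodule Λ (Fin n → Λ) := C.map s with hC'
  have hCback : Submodule.map π C' = C := by
    rw [hC', ← Submodule.map_comp, hs, Submodule.map_id]
  apply Set.Subset.antisymm
  · intro x hx
    have hx' : x ∈ radJ bas • C ⊓ radJ bas ^ (l + 1) • ⊤ := hx
    have h1x : s x ∈ radJ bas • C' := by
      have := Submodule.mem_map_of_mem (f := s) hx'.1
      rwa [Submodule.map_smul''] at this
    have h2x : s x ∈ (radJ bas ^ (l + 1) • ⊤ : Submodule Λ (Fin n → Λ)) := by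
      have := Submodule.mem_map_of_mem (f := s) hx'.2
      rw [Submodule.map_smul''] at this
      exact Submodule.smul_mono le_rfl le_top this
    have hmem : s x ∈ ((radJ bas • C' ⊓ radJ bas ^ (l + 1) • ⊤ :
        Submodule Λ (Fin n → Λ)) : Set (Fin n → Λ)) := Submodule.mem_inf.2 ⟨h1x, h2x⟩
    rw [TPA.free_case bas hmul hmul0 h1 C' l hl] at hmem
    have hfin := TPA.arrowSpan_map bas h1 π
      (U := ((C' ⊓ radJ bas ^ l • ⊤ : Submodule Λ (Fin n → Λ)) : Set (Fin n → Λ)))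
      (U' := ((C ⊓ radJ bas ^ l • ⊤ : Submodule Λ P) : Set P)) ?_ hmem
    · rwa [hsx x] at hfin
    · intro u hu
      have hu' : u ∈ C' ⊓ radJ bas ^ l • ⊤ := hu
      refine Submodule.mem_inf.2 ⟨?_, ?_⟩
      · exact hCback ▸ Submodule.mem_map_of_mem hu'.1
      · have := Submodule.mem_map_of_mem (f := π) hu'.2
        rw [Submodule.map_smul''] at this
        exact Submodule.smul_mono le_rfl le_top this
  · exact TPA.easy_incl bas hmul hmul0 h1 C l
end

section
/- Let $\Lambda$ be a finite dimensional algebra, $A$ and $B$ finite dimensional $\Lambda$-modules with $A$ local (i.e., $A/JA$ simple), and let $0 \to A \xrightarrow{f} G \xrightarrow{g} B \to 0$ be a short exact sequence such that the induced extension of $J^{\tau-1}B$ by $A/JA$ (obtained by pulling back along $J^{\tau-1}B \hookrightarrow B$ and pushing out along $A \to A/JA$) is non-split. Then $f(A) \subseteq J^\tau G$. -/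
open Submodule

/-- A finite product of semisimple modules is semisimple. -/
private theorem aux_pi_semisimple {R : Type*} [Ring R] {ι : Type*} [Finite ι] [DecidableEq ι]
    (M : ι → Type*) [∀ i, AddCommGroup (M i)] [∀ i, Module R (M i)]
    [∀ i, IsSemisimpleModule R (M i)] : IsSemisimpleModule R (∀ i, M i) :=
  isSemisimpleModule_of_isSemisimpleModule_submodule'
    (p := fun i => LinearMap.range (LinearMap.single R M i))
    (fun _ => .range _)
    (by simp_rw [LinearMap.range_eq_map, Submodule.iSup_map_single, Submodule.pi_top])

/-- Over a left-artinian ring, the quotient by the Jacobson radical is a semisimple module. -/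
private theorem aux_ss_quot_jacobson {R : Type*} [Ring R] [IsArtinian R R] :
    IsSemisimpleModule R (R ⧸ Ideal.jacobson (⊥ : Ideal R)) := by
  classical
  have hS : ({I : Ideal R | ∃ s : Finset (Ideal R), (∀ m ∈ s, m.IsMaximal) ∧
      I = s.inf id}).Nonempty := ⟨⊤, ∅, by simp, by simp⟩
  obtain ⟨I₀, ⟨s, hs, rfl⟩, hmin⟩ := IsArtinian.set_has_minimal _ hS
  have hle : ∀ m : Ideal R, m.IsMaximal → s.inf id ≤ m := by
    intro m hm
    have hmem : s.inf id ⊓ m ∈ {I : Ideal R | ∃ s : Finset (Ideal R),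
        (∀ m ∈ s, m.IsMaximal) ∧ I = s.inf id} := by
      refine ⟨insert m s, ?_, ?_⟩
      · intro n hn
        rcases Finset.mem_insert.mp hn with rfl | hn
        · exact hm
        · exact hs n hn
      · rw [Finset.inf_insert]
        exact (inf_comm _ _)
    have h1 : ¬ (s.inf id ⊓ m < s.inf id) := hmin _ hmem
    have h2 : s.inf id ⊓ m = s.inf id := by
      rcases lt_or_eq_of_le (inf_le_left : s.inf id ⊓ m ≤ s.inf id) with h | h
      · exact absurd h h1
      · exact h
    exact h2 ▸ inf_le_right
  have hIJ : s.inf id ≤ Ideal.jacobson (⊥ : Ideal R) :=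
    le_sInf fun m hm => hle m hm.2
  have hJle : ∀ i : Ideal R, i ∈ s → Ideal.jacobson (⊥ : Ideal R) ≤ i := fun i hi =>
    sInf_le ⟨bot_le, hs i hi⟩
  -- the embedding into the product of the simple quotients
  let l : (R ⧸ Ideal.jacobson (⊥ : Ideal R)) →ₗ[R] (∀ i : ↥s, R ⧸ (i : Ideal R)) :=
    LinearMap.pi fun i => Submodule.mapQ _ _ LinearMap.id (by
      simpa using hJle (i : Ideal R) i.2)
  have hinj : Function.Injective l := by
    rw [← LinearMap.ker_eq_bot, eq_bot_iff]
    intro x hx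
    obtain ⟨r, rfl⟩ := Submodule.Quotient.mk_surjective _ x
    simp only [LinearMap.mem_ker, l] at hx
    have hr : ∀ i : ↥s, r ∈ (i : Ideal R) := by
      intro i
      have h5 := congrFun hx i
      simp only [LinearMap.pi_apply, Submodule.mapQ_apply, LinearMap.id_apply,
        Pi.zero_apply] at h5
      exact (Submodule.Quotient.mk_eq_zero _).mp h5
    have : r ∈ s.inf id := Submodule.mem_finsetInf.mpr fun i hi => hr ⟨i, hi⟩
    simp only [Submodule.mem_bot]
    exact (Submodule.Quotient.mk_eq_zero _).mpr (hIJ this)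
  haveI : ∀ i : ↥s, IsSimpleModule R (R ⧸ (i : Ideal R)) := fun i =>
    isSimpleModule_iff_isCoatom.mpr (Ideal.isMaximal_def.mp (hs i i.2))
  haveI : IsSemisimpleModule R (∀ i : ↥s, R ⧸ (i : Ideal R)) := aux_pi_semisimple _
  exact IsSemisimpleModule.congr (M := ↥(LinearMap.range l)) (LinearEquiv.ofInjective l hinj)

/-- A module over a left-artinian ring annihilated by the Jacobson radical is semisimple. -/
private theorem aux_ss_of_jacobson_smul_eq_bot {R M : Type*} [Ring R] [AddCommGroup M]
    [Module R M] [IsArtinian R R]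
    (h : (Ideal.jacobson (⊥ : Ideal R)) • (⊤ : Submodule R M) = ⊥) :
    IsSemisimpleModule R M := by
  haveI := aux_ss_quot_jacobson (R := R)
  refine isSemisimpleModule_of_isSemisimpleModule_submodule'
    (p := fun x : M => Submodule.span R {x}) (fun x => ?_)
    (eq_top_iff.mpr fun m _ => (le_iSup (fun x : M => Submodule.span R {x}) m)
      (Submodule.mem_span_singleton_self m))
  have hker : Ideal.jacobson (⊥ : Ideal R) ≤ LinearMap.ker (LinearMap.toSpanSingleton R M x) := by
    intro j hj
    have : j • x ∈ (⊥ : Submodule R M) := h ▸ Submodule.smul_mem_smul hj Submodule.mem_top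
    simpa [LinearMap.mem_ker] using this
  have hrange : Submodule.span R {x} =
      LinearMap.range ((Ideal.jacobson (⊥ : Ideal R)).liftQ
        (LinearMap.toSpanSingleton R M x) hker) := by
    rw [Submodule.range_liftQ, ← LinearMap.span_singleton_eq_range]
  show IsSemisimpleModule R ↥(Submodule.span R {x})
  rw [hrange]
  exact .range _

/-- Nakayama's lemma for modules over a possibly noncommutative ring. -/
private theorem aux_nakayama_span {R M : Type*} [Ring R] [AddCommGroup M] [Module R M] :
    ∀ (s : Finset M) (N : Submodule R M), Submodule.span R (↑s : Set M) = N →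
      N ≤ Ideal.jacobson (⊥ : Ideal R) • N → N = ⊥ := by
  classical
  intro s
  induction s using Finset.strongInduction with
  | _ s ih =>
    rcases Finset.eq_empty_or_nonempty s with rfl | ⟨x, hx⟩
    · intro N hspan _
      rw [← hspan, Finset.coe_empty, Submodule.span_empty]
    intro N hspan hle
    have hright : ∀ u ∈ Ideal.jacobson (⊥ : Ideal R), ∀ v : R,
        u * v ∈ Ideal.jacobson (⊥ : Ideal R) := by
      intro u hu v
      exact Ideal.mul_mem_right v _ hu
    have key : ∀ m ∈ Ideal.jacobson (⊥ : Ideal R) • N,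
        ∃ a : M → R, (∀ y ∈ s, a y ∈ Ideal.jacobson (⊥ : Ideal R)) ∧
          m = ∑ y ∈ s, a y • y := by
      intro m hm
      refine Submodule.smul_induction_on hm ?_ ?_
      · intro j hj n hn
        rw [← hspan] at hn
        obtain ⟨c, hc⟩ := mem_span_finset.mp hn
        refine ⟨fun y => j * c y, fun y _ => hright j hj (c y), ?_⟩
        rw [← hc.2, Finset.smul_sum]
        exact Finset.sum_congr rfl fun y _ => smul_smul j (c y) y
      · rintro m₁ m₂ ⟨a₁, ha₁, rfl⟩ ⟨a₂, ha₂, rfl⟩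
        refine ⟨fun y => a₁ y + a₂ y, fun y hy =>
          Ideal.add_mem _ (ha₁ y hy) (ha₂ y hy), ?_⟩
        rw [← Finset.sum_add_distrib]
        exact Finset.sum_congr rfl fun y _ => (add_smul _ _ _).symm
    obtain ⟨a, haJ, hax⟩ := key x (hle (hspan ▸ Submodule.subset_span hx))
    have hsub : (1 - a x) • x ∈ Submodule.span R (↑(s.erase x) : Set M) := by
      have h₁ : (∑ y ∈ s, a y • y) = a x • x + ∑ y ∈ s.erase x, a y • y :=
        (Finset.add_sum_erase s _ hx).symm
      have h₂ : (1 - a x) • x = ∑ y ∈ s.erase x, a y • y := by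
        rw [sub_smul, one_smul]
        rw [h₁] at hax
        exact sub_eq_of_eq_add' hax
      rw [h₂]
      exact Submodule.sum_mem _ fun y hy => Submodule.smul_mem _ _ (Submodule.subset_span hy)
    obtain ⟨z, hz⟩ : ∃ z : R, z * (1 - a x) = 1 := by
      obtain ⟨z, h0⟩ := Ideal.mem_jacobson_iff.mp (haJ x hx) (-1)
      rw [Submodule.mem_bot] at h0
      refine ⟨z, ?_⟩
      rw [mul_sub, mul_one]
      rw [mul_neg_one, neg_mul] at h0
      have h1 : -(z * a x) + z = 1 := by rwa [sub_eq_zero] at h0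
      rwa [neg_add_eq_sub] at h1
    have hxN' : x ∈ Submodule.span R (↑(s.erase x) : Set M) := by
      have h3 := Submodule.smul_mem _ z hsub
      rwa [smul_smul, hz, one_smul] at h3
    have hNN' : Submodule.span R (↑(s.erase x) : Set M) = N := by
      refine le_antisymm ?_ ?_
      · rw [← hspan]
        exact Submodule.span_mono (Finset.coe_subset.mpr (Finset.erase_subset x s))
      · rw [← hspan, Submodule.span_le]
        intro y hy
        rcases eq_or_ne y x with rfl | hne
        · exact hxN'
        · exact Submodule.subset_span (Finset.mem_erase.mpr ⟨hne, hy⟩)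
    exact ih (s.erase x) (Finset.erase_ssubset hx) N hNN' hle

private theorem aux_nakayama_fg {R M : Type*} [Ring R] [AddCommGroup M] [Module R M]
    {N : Submodule R M} (hN : N.FG)
    (hle : N ≤ Ideal.jacobson (⊥ : Ideal R) • N) : N = ⊥ := by
  obtain ⟨s, hs⟩ := hN
  exact aux_nakayama_span s N hs hle

/-- Let $Λ$ be a finite dimensional algebra, $A$, $B$ finite dimensional modules with
$A$ local (i.e. $A/JA$ simple), and $0 → A \xrightarrow{f} G \xrightarrow{g} B → 0$ a
short exact sequence such that the induced extension of $J^{τ-1} B$ by $A/JA$ (the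
pullback along $J^{τ-1}B ↪ B$ pushed out along $A → A/JA$) is non-split; the latter is
expressed by saying that the canonical projection $A → A/JA$ does not extend to a
$Λ$-map $g^{-1}(J^{τ-1}B) → A/JA$.  Then $f(A) ⊆ J^τ G$. -/
theorem stmt_14 {K Λ : Type*} [Field K] [Ring Λ] [Algebra K Λ] [FiniteDimensional K Λ]
    {A G B : Type*}
    [AddCommGroup A] [Module K A] [Module Λ A] [IsScalarTower K Λ A] [FiniteDimensional K A]
    [AddCommGroup G] [Module K G] [Module Λ G] [IsScalarTower K Λ G] [FiniteDimensional K G]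
    [AddCommGroup B] [Module K B] [Module Λ B] [IsScalarTower K Λ B] [FiniteDimensional K B]
    (J : Ideal Λ) (hJ : J = Ideal.jacobson ⊥) (τ : ℕ) (hτ : 1 ≤ τ)
    (hlocal : IsSimpleModule Λ (A ⧸ (J • ⊤ : Submodule Λ A)))
    (f : A →ₗ[Λ] G) (g : G →ₗ[Λ] B)
    (hf : Function.Injective f) (hg : Function.Surjective g)
    (hex : LinearMap.range f = LinearMap.ker g)
    (hnonsplit : ¬ ∃ φ : ↥(Submodule.comap g (J ^ (τ - 1) • ⊤ : Submodule Λ B)) →ₗ[Λ]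
        (A ⧸ (J • ⊤ : Submodule Λ A)),
      ∀ (a : A) (h : f a ∈ Submodule.comap g (J ^ (τ - 1) • ⊤ : Submodule Λ B)),
        φ ⟨f a, h⟩ = Submodule.Quotient.mk a) :
    LinearMap.range f ≤ (J ^ τ • ⊤ : Submodule Λ G) := by
  classical
  have hτ' : τ - 1 + 1 = τ := Nat.succ_pred_eq_of_pos hτ
  -- description of the pullback H = g⁻¹(J^(τ-1) B)
  have hH : Submodule.comap g (J ^ (τ - 1) • ⊤ : Submodule Λ B) =
      LinearMap.range f ⊔ J ^ (τ - 1) • ⊤ := by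
    have h1 : (J ^ (τ - 1) • ⊤ : Submodule Λ B) =
        Submodule.map g (J ^ (τ - 1) • ⊤ : Submodule Λ G) := by
      rw [Submodule.map_smul'', Submodule.map_top, LinearMap.range_eq_top.mpr hg]
    rw [h1, Submodule.comap_map_eq, ← hex, sup_comm]
  -- J • H = J•f(A) ⊔ J^τ•⊤
  have hswap : ∀ (k : ℕ) (N : Submodule Λ G), J • (J ^ k • N) = J ^ k • (J • N) := by
    intro k
    induction k with
    | zero =>
      intro N
      have h1 : (1 : Ideal Λ) = ⊤ := by
        rw [eq_top_iff]
        intro x _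
        rw [Submodule.one_eq_span]
        exact Submodule.mem_span_singleton.mpr ⟨x, by simp⟩
      rw [Submodule.pow_zero, h1, Submodule.top_smul, Submodule.top_smul]
    | succ n ih =>
      intro N
      rw [Submodule.pow_succ, ← Ideal.smul_eq_mul, Submodule.smul_assoc,
        Submodule.smul_assoc, ih]
  have hE : J • (J ^ (τ - 1) • ⊤ : Submodule Λ G) = J ^ τ • ⊤ := by
    rw [hswap, ← Submodule.smul_assoc, Ideal.smul_eq_mul, ← Submodule.pow_succ, hτ']
  have hJH : J • Submodule.comap g (J ^ (τ - 1) • ⊤ : Submodule Λ B) =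
      J • LinearMap.range f ⊔ J ^ τ • ⊤ := by
    rw [hH, Submodule.smul_sup, hE]
  by_cases hW : LinearMap.range f ≤ J • LinearMap.range f ⊔ J ^ τ • ⊤
  · -- Nakayama's lemma
    haveI : IsNoetherian Λ G := isNoetherian_of_tower K inferInstance
    set π := (J ^ τ • ⊤ : Submodule Λ G).mkQ with hπ
    have hNle : Submodule.map π (LinearMap.range f) ≤
        J • Submodule.map π (LinearMap.range f) := by
      calc Submodule.map π (LinearMap.range f)
          ≤ Submodule.map π (J • LinearMap.range f ⊔ J ^ τ • ⊤) := Submodule.map_mono hW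
        _ = J • Submodule.map π (LinearMap.range f) ⊔ Submodule.map π (J ^ τ • ⊤) := by
            rw [Submodule.map_sup, Submodule.map_smul'']
        _ = J • Submodule.map π (LinearMap.range f) := by
            rw [sup_eq_left.mpr]
            intro x hx
            obtain ⟨y, hy, rfl⟩ := hx
            have : π y = 0 := (Submodule.Quotient.mk_eq_zero _).mpr hy
            rw [this]
            exact Submodule.zero_mem _
    have hbot : Submodule.map π (LinearMap.range f) = ⊥ :=
      aux_nakayama_fg (IsNoetherian.noetherian _) (hJ ▸ hNle)
    intro x hx
    have : π x ∈ Submodule.map π (LinearMap.range f) := ⟨x, hx, rfl⟩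
    rw [hbot, Submodule.mem_bot] at this
    simpa using (Submodule.Quotient.mk_eq_zero _).mp this
  · exfalso
    apply hnonsplit
    set Hs := Submodule.comap g (J ^ (τ - 1) • ⊤ : Submodule Λ B) with hHs
    set Wg : Submodule Λ G := J • LinearMap.range f ⊔ J ^ τ • ⊤ with hWg
    have hfH : ∀ a : A, f a ∈ Hs := by
      intro a
      have hk : f a ∈ LinearMap.ker g := hex ▸ LinearMap.mem_range_self f a
      rw [LinearMap.mem_ker] at hk
      simp only [hHs, Submodule.mem_comap, hk]
      exact Submodule.zero_mem _
    set W' : Submodule Λ Hs := Submodule.comap Hs.subtype Wg with hW'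
    haveI : IsArtinian Λ Λ := isArtinian_of_tower K inferInstance
    have hsmul : (Ideal.jacobson (⊥ : Ideal Λ)) • (⊤ : Submodule Λ (Hs ⧸ W')) = ⊥ := by
      rw [← hJ]
      refine le_bot_iff.mp (Submodule.smul_le.mpr ?_)
      intro j hj m _
      obtain ⟨y, rfl⟩ := Submodule.Quotient.mk_surjective _ m
      rw [← Submodule.Quotient.mk_smul, Submodule.mem_bot, Submodule.Quotient.mk_eq_zero]
      show (j • y : Hs) ∈ W'
      rw [hW', Submodule.mem_comap]
      have : j • (y : G) ∈ J • Hs := Submodule.smul_mem_smul hj y.2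
      exact (hJH ▸ this : j • (y : G) ∈ Wg)
    haveI hssM : IsSemisimpleModule Λ (Hs ⧸ W') := aux_ss_of_jacobson_smul_eq_bot hsmul
    set fH : A →ₗ[Λ] Hs := f.codRestrict Hs hfH with hfHdef
    set α : A →ₗ[Λ] Hs ⧸ W' := W'.mkQ ∘ₗ fH with hα
    have hmemW : ∀ a : A, (α a = 0 ↔ f a ∈ Wg) := by
      intro a
      rw [hα, LinearMap.comp_apply, Submodule.mkQ_apply, Submodule.Quotient.mk_eq_zero,
        hW', Submodule.mem_comap]
      rfl
    have hJk : (J • ⊤ : Submodule Λ A) ≤ LinearMap.ker α := by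
      refine Submodule.smul_le.mpr fun j hj a _ => ?_
      rw [LinearMap.mem_ker, map_smul]
      have hmem : (j • fH a : Hs) ∈ W' := by
        rw [hW', Submodule.mem_comap]
        exact Submodule.mem_sup_left (Submodule.smul_mem_smul hj ⟨a, rfl⟩ :
          j • f a ∈ J • LinearMap.range f)
      calc j • α a = W'.mkQ (j • fH a) := by rw [hα]; simp
        _ = 0 := (Submodule.Quotient.mk_eq_zero _).mpr hmem
    have hker_ne : LinearMap.ker α ≠ ⊤ := by
      intro htop
      apply hW
      rintro _ ⟨a, rfl⟩
      have : α a = 0 := by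
        have : a ∈ LinearMap.ker α := htop ▸ Submodule.mem_top
        exact this
      exact (hmemW a).mp this
    have hcoatom : IsCoatom (J • ⊤ : Submodule Λ A) := isSimpleModule_iff_isCoatom.mp hlocal
    have hkerα : LinearMap.ker α = (J • ⊤ : Submodule Λ A) := by
      by_contra hne
      exact hker_ne (hcoatom.2 _ (lt_of_le_of_ne hJk fun h => hne h.symm))
    set αbar : (A ⧸ (J • ⊤ : Submodule Λ A)) →ₗ[Λ] Hs ⧸ W' :=
      (J • ⊤ : Submodule Λ A).liftQ α hJk with hαbar
    have hinj : Function.Injective αbar :=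
      LinearMap.ker_eq_bot.mp (Submodule.ker_liftQ_eq_bot _ _ _ hkerα.le)
    obtain ⟨C, hC⟩ := exists_isCompl (LinearMap.range αbar)
    set e := LinearEquiv.ofInjective αbar hinj with he
    refine ⟨e.symm.toLinearMap ∘ₗ (Submodule.projectionOnto _ C hC) ∘ₗ W'.mkQ,
      fun a h => ?_⟩
    have h1 : (⟨f a, h⟩ : Hs) = fH a := rfl
    have h2 : W'.mkQ (fH a) = αbar (Submodule.Quotient.mk a) := by
      rw [hαbar, Submodule.liftQ_apply]
      rfl
    have h3 : αbar (Submodule.Quotient.mk a) = ↑(e (Submodule.Quotient.mk a)) := by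
      rw [he, LinearEquiv.ofInjective_apply]
    simp only [LinearMap.comp_apply, LinearEquiv.coe_coe, h1, h2, h3,
      Submodule.projectionOnto_apply_left hC, LinearEquiv.symm_apply_apply]
end
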